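/- arXiv:0905.4597 — 5 statements merged into one kernel-verified Lean document; each statement's English description precedes it below -/
import Mathlib

section
/- Let S = K[x_1,...,x_n] be a polynomial ring over a field K, I ⊂ S a monomial ideal, and v a monomial with v ∉ I. Then sdepth_S(I : v) ≥ sdepth_S(I). -/
open MvPolynomial

/-- The set of exponent vectors of monomials in the Stanley space `aK[Z]`. -/
def stanleyCell {n : ℕ} (a : Fin n →₀ ℕ) (Z : Finset (Fin n)) : Set (Fin n →₀ ℕ) :=
  {b | (∀ i, a i ≤ b i) ∧ ∀ i, i ∉ Z → b i = a i}

/-- A Stanley decomposition of a set `M` of exponent vectors: a finite family of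
Stanley spaces whose monomial sets partition `M`. -/
def IsStanleyDecomp {n : ℕ} (M : Set (Fin n →₀ ℕ))
    (D : Finset ((Fin n →₀ ℕ) × Finset (Fin n))) : Prop :=
  (∀ p ∈ D, stanleyCell p.1 p.2 ⊆ M) ∧
    ∀ b ∈ M, ∃! p : (Fin n →₀ ℕ) × Finset (Fin n), p ∈ D ∧ b ∈ stanleyCell p.1 p.2

/-- Stanley depth of a set of exponent vectors. -/
noncomputable def sdepthSet {n : ℕ} (M : Set (Fin n →₀ ℕ)) : ℕ :=
  sSup {k | ∃ D, IsStanleyDecomp M D ∧ ∀ p ∈ D, k ≤ p.2.card}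

/-- The set of exponent vectors of monomials belonging to an ideal. -/
def monoSet {K : Type} [Field K] {n : ℕ} (I : Ideal (MvPolynomial (Fin n) K)) :
    Set (Fin n →₀ ℕ) := {d | (monomial d (1 : K)) ∈ I}

/-- Stanley depth of a monomial ideal. -/
noncomputable def sdepthIdeal {K : Type} [Field K] {n : ℕ}
    (I : Ideal (MvPolynomial (Fin n) K)) : ℕ := sdepthSet (monoSet I)

/-- Stanley depth of the quotient `J/I` of monomial ideals. -/
noncomputable def sdepthQuot {K : Type} [Field K] {n : ℕ}
    (I J : Ideal (MvPolynomial (Fin n) K)) : ℕ := sdepthSet (monoSet J \ monoSet I)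

/-- Depth of a module with respect to an ideal `m`: the supremum of lengths of
regular sequences on `M` consisting of elements of `m`. -/
noncomputable def mdepth {R : Type} [CommRing R] (m : Ideal R)
    (M : Type) [AddCommGroup M] [Module R M] : ℕ :=
  sSup {k | ∃ rs : List R, rs.length = k ∧ (∀ r ∈ rs, r ∈ m) ∧
    RingTheory.Sequence.IsRegular M rs}

/-- The maximal graded ideal `(x_1, ..., x_n)`. -/
noncomputable def maxIdeal (K : Type) [Field K] (n : ℕ) : Ideal (MvPolynomial (Fin n) K) :=
  Ideal.span (Set.range X)

/-- `J/I` as a module. -/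
abbrev idealQuot {R : Type} [CommRing R] (I J : Ideal R) :=
  ↥J ⧸ (Submodule.comap J.subtype I)

/-- A monomial ideal: generated by monomials. -/
def IsMonomialIdeal {K : Type} [Field K] {n : ℕ}
    (I : Ideal (MvPolynomial (Fin n) K)) : Prop :=
  ∃ G : Set (Fin n →₀ ℕ), I = Ideal.span ((fun d => (monomial d (1 : K))) '' G)

/-- A squarefree monomial ideal: generated by squarefree monomials. -/
def IsSqfreeMonomialIdeal {K : Type} [Field K] {n : ℕ}
    (I : Ideal (MvPolynomial (Fin n) K)) : Prop :=
  ∃ G : Set (Fin n →₀ ℕ), (∀ d ∈ G, ∀ i, d i ≤ 1) ∧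
    I = Ideal.span ((fun d => (monomial d (1 : K))) '' G)

/-- The inclusion `K[x_1,...,x_{n-1}] → K[x_1,...,x_n]`. -/
noncomputable def extMap (K : Type) [Field K] (n : ℕ) :
    MvPolynomial (Fin n) K →+* MvPolynomial (Fin (n + 1)) K :=
  (rename (Fin.castSucc) : MvPolynomial (Fin n) K →ₐ[K] MvPolynomial (Fin (n + 1)) K).toRingHom

/-- Krull dimension of a module: dimension of `R / ann M`. -/
noncomputable def mdim (R : Type) [CommRing R]
    (M : Type) [AddCommGroup M] [Module R M] : WithBot (WithTop ℕ) :=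
  ringKrullDim (R ⧸ Module.annihilator R M)

lemma cell_colon {n : ℕ} {a v : Fin n →₀ ℕ} {Z : Finset (Fin n)}
    (hc : ∀ i ∉ Z, v i ≤ a i) (b : Fin n →₀ ℕ) :
    b ∈ stanleyCell (a - v) Z ↔ b + v ∈ stanleyCell a Z := by
  constructor
  · rintro ⟨h1, h2⟩
    refine ⟨fun i => ?_, fun i hi => ?_⟩
    · have := h1 i
      rw [Finsupp.tsub_apply] at this
      rw [Finsupp.add_apply]
      omega
    · have h3 := h2 i hi
      rw [Finsupp.tsub_apply] at h3
      have h4 := hc i hi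
      rw [Finsupp.add_apply]
      omega
  · rintro ⟨h1, h2⟩
    refine ⟨fun i => ?_, fun i hi => ?_⟩
    · have := h1 i
      rw [Finsupp.add_apply] at this
      rw [Finsupp.tsub_apply]
      omega
    · have := h2 i hi
      rw [Finsupp.add_apply] at this
      rw [Finsupp.tsub_apply]
      omega

lemma decomp_colon {n : ℕ} (M : Set (Fin n →₀ ℕ)) (v : Fin n →₀ ℕ)
    {D : Finset ((Fin n →₀ ℕ) × Finset (Fin n))} (hD : IsStanleyDecomp M D) :
    IsStanleyDecomp {b | b + v ∈ M}
      ((D.filter (fun p => ∀ i ∉ p.2, v i ≤ p.1 i)).image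
        (fun p => (p.1 - v, p.2))) := by
  classical
  obtain ⟨hsub, huniq⟩ := hD
  constructor
  · rintro q hq b hb
    simp only [Finset.mem_image, Finset.mem_filter] at hq
    obtain ⟨p, ⟨hpD, hpc⟩, rfl⟩ := hq
    exact hsub p hpD ((cell_colon hpc b).mp hb)
  · intro b hb
    obtain ⟨p, ⟨hpD, hbp⟩, hup⟩ := huniq (b + v) hb
    have hpc : ∀ i ∉ p.2, v i ≤ p.1 i := fun i hi => by
      have := hbp.2 i hi
      rw [Finsupp.add_apply] at this
      omega
    refine ⟨(p.1 - v, p.2), ⟨?_, (cell_colon hpc b).mpr hbp⟩, ?_⟩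
    · exact Finset.mem_image.mpr ⟨p, Finset.mem_filter.mpr ⟨hpD, hpc⟩, rfl⟩
    · rintro q ⟨hq, hbq⟩
      simp only [Finset.mem_image, Finset.mem_filter] at hq
      obtain ⟨p', ⟨hp'D, hp'c⟩, rfl⟩ := hq
      have : p' = p := hup p' ⟨hp'D, (cell_colon hp'c b).mp hbq⟩
      rw [this]

lemma monoSet_colon {K : Type} [Field K] {n : ℕ} (I : Ideal (MvPolynomial (Fin n) K))
    (v : Fin n →₀ ℕ) :
    monoSet (Submodule.colon I (Ideal.span {monomial v (1 : K)})) =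
      {b | b + v ∈ monoSet I} := by
  ext b
  simp only [monoSet, Set.mem_setOf_eq]
  rw [Ideal.mem_colon_span_singleton, monomial_mul, one_mul]

theorem sdepth_colon_ge_sdepth {K : Type} [Field K] {n : ℕ}
    (I : Ideal (MvPolynomial (Fin n) K)) (hI : IsMonomialIdeal I)
    (v : Fin n →₀ ℕ) (hv : (monomial v (1 : K)) ∉ I) :
    sdepthIdeal (Submodule.colon I (Ideal.span {monomial v (1 : K)})) ≥ sdepthIdeal I := by
  classical
  unfold sdepthIdeal
  rw [monoSet_colon]
  set M := monoSet I with hMdef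
  by_cases hM : M = ∅
  · have : {b | b + v ∈ M} = M := by
      rw [hM]; ext b; simp
    rw [this]
  · -- M nonempty, hence M:v nonempty
    obtain ⟨a, ha⟩ := Set.nonempty_iff_ne_empty.mpr hM
    have hav : a + v ∈ M := by
      have : (monomial a (1 : K)) * (monomial v (1 : K)) ∈ I := I.mul_mem_right _ ha
      rwa [monomial_mul, one_mul] at this
    have hMv : ({b | b + v ∈ M} : Set (Fin n →₀ ℕ)).Nonempty := ⟨a, hav⟩
    unfold sdepthSet
    apply csSup_le'
    rintro k ⟨D, hD, hcard⟩
    have hbdd : BddAbove {k | ∃ D', IsStanleyDecomp {b | b + v ∈ M} D' ∧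
        ∀ p ∈ D', k ≤ p.2.card} := by
      refine ⟨n, ?_⟩
      rintro k' ⟨D', hD', hcard'⟩
      obtain ⟨b, hb⟩ := hMv
      obtain ⟨p, ⟨hpD', _⟩, _⟩ := hD'.2 b hb
      calc k' ≤ p.2.card := hcard' p hpD'
        _ ≤ (Finset.univ : Finset (Fin n)).card := Finset.card_le_univ _
        _ = n := by simp
    apply le_csSup hbdd
    refine ⟨_, decomp_colon M v hD, ?_⟩
    intro q hq
    simp only [Finset.mem_image, Finset.mem_filter] at hq
    obtain ⟨p, ⟨hpD, _⟩, rfl⟩ := hq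
    exact hcard p hpD
end

section
/- Let S' = K[x_1,...,x_{n-1}], S = S'[x_n], and I ⊊ J monomial ideals of S'. Then sdepth_S(JS/x_n·IS) ≥ min{sdepth_S(JS/IS), sdepth_{S'}(I)}. -/
open MvPolynomial

namespace SdAux

variable {K : Type} [Field K] {n : ℕ}

def csEmb (n : ℕ) : Fin n ↪ Fin (n + 1) := ⟨Fin.castSucc, Fin.castSucc_injective n⟩

noncomputable def resF {n : ℕ} (b : Fin (n + 1) →₀ ℕ) : Fin n →₀ ℕ :=
  Finsupp.equivFunOnFinite.symm fun i => b i.castSucc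

@[simp] lemma resF_apply (b : Fin (n + 1) →₀ ℕ) (i : Fin n) : resF b i = b i.castSucc := rfl

noncomputable def embF {n : ℕ} (a : Fin n →₀ ℕ) : Fin (n + 1) →₀ ℕ :=
  Finsupp.embDomain (csEmb n) a

@[simp] lemma embF_castSucc (a : Fin n →₀ ℕ) (i : Fin n) : embF a i.castSucc = a i :=
  Finsupp.embDomain_apply_self _ _ _

@[simp] lemma embF_last (a : Fin n →₀ ℕ) : embF a (Fin.last n) = 0 := by
  refine Finsupp.embDomain_notin_range _ _ _ ?_
  rintro ⟨i, hi⟩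
  exact (Fin.castSucc_lt_last i).ne hi

@[simp] lemma resF_embF (a : Fin n →₀ ℕ) : resF (embF a) = a := by
  ext i; simp

lemma embF_resF {b : Fin (n + 1) →₀ ℕ} (hb : b (Fin.last n) = 0) : embF (resF b) = b := by
  ext i
  induction i using Fin.lastCases with
  | last => simp [hb]
  | cast j => simp

lemma embF_injective : Function.Injective (embF (n := n)) :=
  Finsupp.embDomain_injective _

lemma split_exp (b : Fin (n + 1) →₀ ℕ) :
    b = Finsupp.single (Fin.last n) (b (Fin.last n)) + embF (resF b) := by
  ext i
  induction i using Fin.lastCases with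
  | last => simp
  | cast j =>
    simp [Finsupp.single_apply, (Fin.castSucc_lt_last j).ne']

lemma monomial_split (b : Fin (n + 1) →₀ ℕ) :
    (monomial b (1 : K)) =
      X (Fin.last n) ^ (b (Fin.last n)) * (extMap K n) (monomial (resF b) (1 : K)) := by
  rw [extMap]
  simp only [AlgHom.toRingHom_eq_coe, RingHom.coe_coe, rename_monomial]
  rw [X_pow_eq_monomial, monomial_mul, one_mul,
    show (Finsupp.mapDomain Fin.castSucc (resF b) : Fin (n + 1) →₀ ℕ) = embF (resF b) from
      (Finsupp.embDomain_eq_mapDomain (csEmb n) (resF b)).symm]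
  exact congrArg (fun d => monomial d (1 : K)) (split_exp b)

noncomputable def phi : MvPolynomial (Fin (n + 1)) K →ₐ[K] MvPolynomial (Fin n) K :=
  aeval (fun i => Fin.lastCases 1 X i)

lemma phi_ext (p : MvPolynomial (Fin n) K) : phi ((extMap K n) p) = p := by
  rw [extMap, phi]
  simp only [AlgHom.toRingHom_eq_coe, RingHom.coe_coe, aeval_rename]
  have : ((fun i => Fin.lastCases (motive := fun _ => MvPolynomial (Fin n) K) 1 X i) ∘
      Fin.castSucc) = X := by
    funext j; simp
  rw [this, aeval_X_left_apply]

lemma phi_comp : (phi (K := K) (n := n)).toRingHom.comp (extMap K n) = RingHom.id _ :=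
  RingHom.ext fun p => phi_ext p

lemma mem_ext_iff (J : Ideal (MvPolynomial (Fin n) K)) (b : Fin (n + 1) →₀ ℕ) :
    (monomial b (1 : K)) ∈ Ideal.map (extMap K n) J ↔ (monomial (resF b) (1 : K)) ∈ J := by
  constructor
  · intro h
    have h2 := Ideal.mem_map_of_mem (phi (K := K) (n := n)).toRingHom h
    rw [Ideal.map_map, phi_comp, Ideal.map_id] at h2
    have h3 : phi (K := K) (monomial b (1 : K)) = monomial (resF b) (1 : K) := by
      rw [monomial_split b]
      simp only [map_mul, map_pow]
      rw [show ((phi (K := K) (n := n)) (X (Fin.last n))) = 1 by simp [phi], one_pow, one_mul]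
      exact phi_ext _
    simpa [h3] using h2
  · intro h
    rw [monomial_split b]
    exact Ideal.mul_mem_left _ _ (Ideal.mem_map_of_mem _ h)

lemma mem_xn_ext_iff (I : Ideal (MvPolynomial (Fin n) K)) (b : Fin (n + 1) →₀ ℕ) :
    (monomial b (1 : K)) ∈ Ideal.span {X (Fin.last n)} * Ideal.map (extMap K n) I ↔
      1 ≤ b (Fin.last n) ∧ (monomial (resF b) (1 : K)) ∈ I := by
  constructor
  · intro h
    refine ⟨?_, (mem_ext_iff I b).mp (Ideal.mul_le_right h)⟩
    have h1 : (monomial b (1 : K)) ∈ Ideal.span {X (Fin.last n)} := Ideal.mul_le_left h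
    have h2 := Ideal.mem_span_singleton.mp h1
    rcases X_dvd_monomial.mp h2 with h3 | h3
    · exact absurd h3 one_ne_zero
    · omega
  · rintro ⟨h1, h2⟩
    set c : Fin (n + 1) →₀ ℕ :=
      Finsupp.single (Fin.last n) (b (Fin.last n) - 1) + embF (resF b) with hc
    have hcl : c (Fin.last n) = b (Fin.last n) - 1 := by simp [hc]
    have hcs : ∀ j : Fin n, c j.castSucc = b j.castSucc := by
      intro j
      simp [hc, Finsupp.single_apply, (Fin.castSucc_lt_last j).ne']
    have hresc : resF c = resF b := by ext j; simp [hcs j]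
    have hbc : b = Finsupp.single (Fin.last n) 1 + c := by
      ext i
      induction i using Fin.lastCases with
      | last => simp [hcl]; omega
      | cast j => simp [Finsupp.single_apply, (Fin.castSucc_lt_last j).ne', hcs j]
    have hmono : (monomial b (1 : K)) = X (Fin.last n) * monomial c (1 : K) := by
      rw [show (X (Fin.last n) : MvPolynomial (Fin (n + 1)) K) =
          monomial (Finsupp.single (Fin.last n) 1) 1 by rw [← X_pow_eq_monomial, pow_one],
        monomial_mul, one_mul, hbc]
    rw [hmono]
    exact Ideal.mul_mem_mul (Ideal.mem_span_singleton_self _)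
      ((mem_ext_iff I c).mpr (hresc ▸ h2))

lemma last_not_mem_map (Z : Finset (Fin n)) : Fin.last n ∉ Z.map (csEmb n) := by
  intro h
  obtain ⟨j, _, hj⟩ := Finset.mem_map.mp h
  exact (Fin.castSucc_lt_last j).ne hj

lemma mem_cell_emb_iff (a : Fin n →₀ ℕ) (Z : Finset (Fin n)) (b : Fin (n + 1) →₀ ℕ) :
    b ∈ stanleyCell (embF a) (Z.map (csEmb n)) ↔
      b (Fin.last n) = 0 ∧ resF b ∈ stanleyCell a Z := by
  constructor
  · rintro ⟨h1, h2⟩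
    refine ⟨?_, fun j => ?_, fun j hj => ?_⟩
    · rw [h2 (Fin.last n) (last_not_mem_map Z), embF_last]
    · simpa using h1 j.castSucc
    · have : (j.castSucc : Fin (n + 1)) ∉ Z.map (csEmb n) := by
        intro hmem
        exact hj ((Finset.mem_map' (csEmb n)).mp hmem)
      simpa using h2 j.castSucc this
  · rintro ⟨h0, h1, h2⟩
    refine ⟨fun i => ?_, fun i hi => ?_⟩
    · induction i using Fin.lastCases with
      | last => simp
      | cast j => simpa using h1 j
    · induction i using Fin.lastCases with
      | last => simp [h0]
      | cast j =>
        have hj : j ∉ Z := fun hz => hi (Finset.mem_map_of_mem _ hz)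
        simpa using h2 j hj

lemma cell_res {a : Fin n →₀ ℕ} {Z : Finset (Fin n)} {b : Fin (n + 1) →₀ ℕ}
    (h : b ∈ stanleyCell (embF a) (Z.map (csEmb n))) : resF b ∈ stanleyCell a Z :=
  ((mem_cell_emb_iff a Z b).mp h).2

lemma mem_cell_self {m : ℕ} (a : Fin m →₀ ℕ) (Z : Finset (Fin m)) : a ∈ stanleyCell a Z :=
  ⟨fun _ => le_refl _, fun _ _ => rfl⟩

lemma bddAbove_sdepth {m : ℕ} {M : Set (Fin m →₀ ℕ)} (hM : M.Nonempty) :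
    BddAbove {k | ∃ D, IsStanleyDecomp M D ∧ ∀ p ∈ D, k ≤ p.2.card} := by
  refine ⟨m, ?_⟩
  rintro k ⟨D, hD, hk⟩
  obtain ⟨b, hb⟩ := hM
  obtain ⟨p, ⟨hpD, _⟩, _⟩ := hD.2 b hb
  calc k ≤ p.2.card := hk p hpD
    _ ≤ (Finset.univ : Finset (Fin m)).card := Finset.card_le_card (Finset.subset_univ _)
    _ = m := by simp

lemma sdepth_set_nonempty {m : ℕ} {M : Set (Fin m →₀ ℕ)}
    {s : Set ℕ} (hs : s = {k | ∃ D, IsStanleyDecomp M D ∧ ∀ p ∈ D, k ≤ p.2.card})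
    (h : 0 < sSup s) : s.Nonempty := by
  rcases Set.eq_empty_or_nonempty s with he | hne
  · rw [he] at h; simp at h
  · exact hne

end SdAux

open SdAux in
theorem sdepth_JS_mod_xnIS {K : Type} [Field K] {n : ℕ}
    (I J : Ideal (MvPolynomial (Fin n) K))
    (hI : IsMonomialIdeal I) (hJ : IsMonomialIdeal J) (hIJ : I < J) :
    sdepthQuot (Ideal.span {X (Fin.last n)} * Ideal.map (extMap K n) I)
        (Ideal.map (extMap K n) J) ≥
      min (sdepthQuot (Ideal.map (extMap K n) I) (Ideal.map (extMap K n) J))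
        (sdepthIdeal I) := by
  classical
  set k1 := sdepthQuot (Ideal.map (extMap K n) I) (Ideal.map (extMap K n) J) with hk1def
  set k2 := sdepthIdeal I with hk2def
  rcases Nat.eq_zero_or_pos (min k1 k2) with h0 | hpos
  · rw [ge_iff_le, h0]; exact Nat.zero_le _
  have hk1pos : 0 < k1 := lt_of_lt_of_le hpos (min_le_left _ _)
  have hk2pos : 0 < k2 := lt_of_lt_of_le hpos (min_le_right _ _)
  set A : Set (Fin (n + 1) →₀ ℕ) :=
    monoSet (Ideal.map (extMap K n) J) \ monoSet (Ideal.map (extMap K n) I) with hA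
  set M : Set (Fin (n + 1) →₀ ℕ) :=
    monoSet (Ideal.map (extMap K n) J) \
      monoSet (Ideal.span {X (Fin.last n)} * Ideal.map (extMap K n) I) with hM
  have hAmem : ∀ b, b ∈ A ↔
      ((monomial (resF b) (1 : K)) ∈ J ∧ (monomial (resF b) (1 : K)) ∉ I) := by
    intro b
    rw [hA, Set.mem_diff]
    exact and_congr (mem_ext_iff J b) (not_congr (mem_ext_iff I b))
  have hMmem : ∀ b, b ∈ M ↔
      ((monomial (resF b) (1 : K)) ∈ J ∧
        ¬(1 ≤ b (Fin.last n) ∧ (monomial (resF b) (1 : K)) ∈ I)) := by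
    intro b
    rw [hM, Set.mem_diff]
    exact and_congr (mem_ext_iff J b) (not_congr (mem_xn_ext_iff I b))
  obtain ⟨d0, hd0J, hd0I⟩ : ∃ d, (monomial d (1 : K)) ∈ J ∧ (monomial d (1 : K)) ∉ I := by
    by_contra hcon
    push_neg at hcon
    obtain ⟨G, hG⟩ := hJ
    have hle : J ≤ I := by
      rw [hG]
      refine Ideal.span_le.mpr ?_
      rintro _ ⟨d, hd, rfl⟩
      exact hcon d (hG ▸ Ideal.subset_span ⟨d, hd, rfl⟩)
    exact hIJ.not_ge hle
  have hAne : A.Nonempty := by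
    refine ⟨embF d0, (hAmem (embF d0)).mpr ?_⟩
    rw [resF_embF]
    exact ⟨hd0J, hd0I⟩
  have hMne : M.Nonempty := by
    obtain ⟨b, hb⟩ := hAne
    obtain ⟨hbJ, hbI⟩ := (hAmem b).mp hb
    exact ⟨b, (hMmem b).mpr ⟨hbJ, fun h => hbI h.2⟩⟩
  have hk1mem : k1 ∈ {k | ∃ D, IsStanleyDecomp A D ∧ ∀ p ∈ D, k ≤ p.2.card} := by
    have e1 : k1 = sSup {k | ∃ D, IsStanleyDecomp A D ∧ ∀ p ∈ D, k ≤ p.2.card} := rfl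
    rw [e1]
    refine Nat.sSup_mem ?_ (bddAbove_sdepth hAne)
    rcases Set.eq_empty_or_nonempty
      {k | ∃ D, IsStanleyDecomp A D ∧ ∀ p ∈ D, k ≤ p.2.card} with he | hne
    · rw [e1, he, csSup_empty] at hk1pos; simp at hk1pos
    · exact hne
  have hIne : (monoSet I).Nonempty := by
    by_contra h
    rw [Set.not_nonempty_iff_eq_empty] at h
    have hall : ∀ k, k ∈ {k | ∃ D, IsStanleyDecomp (monoSet I) D ∧ ∀ p ∈ D, k ≤ p.2.card} :=
      fun k => ⟨∅, ⟨fun p hp => absurd hp (Finset.notMem_empty p),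
        fun b hb => absurd hb (by rw [h]; exact Set.notMem_empty b)⟩,
        fun p hp => absurd hp (Finset.notMem_empty p)⟩
    have hnb : ¬ BddAbove {k | ∃ D, IsStanleyDecomp (monoSet I) D ∧ ∀ p ∈ D, k ≤ p.2.card} := by
      rintro ⟨u, hu⟩
      have := hu (hall (u + 1))
      omega
    have hz : k2 = 0 := by
      have e2 : k2 = sSup {k | ∃ D, IsStanleyDecomp (monoSet I) D ∧ ∀ p ∈ D, k ≤ p.2.card} := rfl
      rw [e2, csSup_of_not_bddAbove hnb, csSup_empty]
      rfl
    omega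
  have hk2mem : k2 ∈ {k | ∃ D, IsStanleyDecomp (monoSet I) D ∧ ∀ p ∈ D, k ≤ p.2.card} := by
    have e2 : k2 = sSup {k | ∃ D, IsStanleyDecomp (monoSet I) D ∧ ∀ p ∈ D, k ≤ p.2.card} := rfl
    rw [e2]
    refine Nat.sSup_mem ?_ (bddAbove_sdepth hIne)
    rcases Set.eq_empty_or_nonempty
      {k | ∃ D, IsStanleyDecomp (monoSet I) D ∧ ∀ p ∈ D, k ≤ p.2.card} with he | hne
    · rw [e2, he, csSup_empty] at hk2pos; simp at hk2pos
    · exact hne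
  obtain ⟨D1, hD1, hcard1⟩ := hk1mem
  obtain ⟨D2, hD2, hcard2⟩ := hk2mem
  set emb : (Fin n →₀ ℕ) × Finset (Fin n) → (Fin (n + 1) →₀ ℕ) × Finset (Fin (n + 1)) :=
    fun p => (embF p.1, p.2.map (csEmb n)) with hemb
  set D : Finset ((Fin (n + 1) →₀ ℕ) × Finset (Fin (n + 1))) := D1 ∪ D2.image emb with hD
  rw [ge_iff_le]
  show min k1 k2 ≤ sSup {k | ∃ D, IsStanleyDecomp M D ∧ ∀ p ∈ D, k ≤ p.2.card}
  refine le_csSup (bddAbove_sdepth hMne) ⟨D, ⟨?_, ?_⟩, ?_⟩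
  · -- cells contained in M
    intro p hp
    rcases Finset.mem_union.mp hp with hp1 | hp2
    · intro b hb
      obtain ⟨hbJ, hbI⟩ := (hAmem b).mp (hD1.1 p hp1 hb)
      exact (hMmem b).mpr ⟨hbJ, fun h => hbI h.2⟩
    · obtain ⟨q, hq, rfl⟩ := Finset.mem_image.mp hp2
      intro b hb
      obtain ⟨h0, hres⟩ := (mem_cell_emb_iff q.1 q.2 b).mp hb
      have hbI : (monomial (resF b) (1 : K)) ∈ I := hD2.1 q hq hres
      exact (hMmem b).mpr ⟨hIJ.le hbI, fun h => by omega⟩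
  · -- unique cover
    intro b hb
    obtain ⟨hbJ, hbnot⟩ := (hMmem b).mp hb
    by_cases hbI : (monomial (resF b) (1 : K)) ∈ I
    · have h0 : b (Fin.last n) = 0 := by
        by_contra h
        exact hbnot ⟨by omega, hbI⟩
      obtain ⟨q, ⟨hqD, hqcell⟩, huniq⟩ := hD2.2 (resF b) hbI
      refine ⟨emb q, ⟨Finset.mem_union_right _ (Finset.mem_image_of_mem emb hqD),
        (mem_cell_emb_iff q.1 q.2 b).mpr ⟨h0, hqcell⟩⟩, ?_⟩
      rintro p ⟨hpD, hpcell⟩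
      rcases Finset.mem_union.mp hpD with hp1 | hp2
      · exact absurd ((hAmem b).mp (hD1.1 p hp1 hpcell)).2 (not_not_intro hbI)
      · obtain ⟨q', hq', rfl⟩ := Finset.mem_image.mp hp2
        have := huniq q' ⟨hq', ((mem_cell_emb_iff q'.1 q'.2 b).mp hpcell).2⟩
        rw [this]
    · obtain ⟨p, ⟨hpD, hpcell⟩, huniq⟩ := hD1.2 b ((hAmem b).mpr ⟨hbJ, hbI⟩)
      refine ⟨p, ⟨Finset.mem_union_left _ hpD, hpcell⟩, ?_⟩
      rintro p' ⟨hp'D, hp'cell⟩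
      rcases Finset.mem_union.mp hp'D with hp1 | hp2
      · exact huniq p' ⟨hp1, hp'cell⟩
      · obtain ⟨q', hq', rfl⟩ := Finset.mem_image.mp hp2
        exact absurd (hD2.1 q' hq' ((mem_cell_emb_iff q'.1 q'.2 b).mp hp'cell).2) hbI
  · -- cardinality bound
    intro p hp
    rcases Finset.mem_union.mp hp with hp1 | hp2
    · exact le_trans (min_le_left k1 k2) (hcard1 p hp1)
    · obtain ⟨q, hq, rfl⟩ := Finset.mem_image.mp hp2
      have hc : (emb q).2.card = q.2.card := Finset.card_map _
      rw [hc]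
      exact le_trans (min_le_right k1 k2) (hcard2 q hq)
end

section
/- Let S' = K[x_1,...,x_{n-1}], S = S'[x_n], I ⊊ J monomial ideals of S', and T = (I + x_n·J)S. Then sdepth_S(T) ≥ min{sdepth_{S'}(I), sdepth_S(JS)}. -/
open MvPolynomial

namespace SdepthAux

variable {n : ℕ}

/-- Embed an exponent vector on `Fin n` into `Fin (n+1)` with last exponent `0`. -/
noncomputable def lift0 (a : Fin n →₀ ℕ) : Fin (n + 1) →₀ ℕ :=
  Finsupp.mapDomain Fin.castSucc a

/-- Restrict an exponent vector on `Fin (n+1)` to the first `n` coordinates. -/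
noncomputable def front (b : Fin (n + 1) →₀ ℕ) : Fin n →₀ ℕ :=
  Finsupp.equivFunOnFinite.symm fun i => b i.castSucc

/-- The exponent vector of `x_n`. -/
noncomputable def eLast (n : ℕ) : Fin (n + 1) →₀ ℕ := Finsupp.single (Fin.last n) 1

@[simp] lemma front_apply (b : Fin (n + 1) →₀ ℕ) (i : Fin n) : front b i = b i.castSucc := rfl

@[simp] lemma lift0_castSucc (a : Fin n →₀ ℕ) (i : Fin n) : lift0 a i.castSucc = a i :=
  Finsupp.mapDomain_apply (Fin.castSucc_injective n) a i

@[simp] lemma lift0_last (a : Fin n →₀ ℕ) : lift0 a (Fin.last n) = 0 := by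
  refine Finsupp.mapDomain_notin_range _ _ ?_
  rintro ⟨j, hj⟩
  exact absurd hj (Fin.castSucc_lt_last j).ne

@[simp] lemma eLast_castSucc (i : Fin n) : eLast n i.castSucc = 0 :=
  Finsupp.single_eq_of_ne' (Fin.castSucc_lt_last i).ne'

@[simp] lemma eLast_last : eLast n (Fin.last n) = 1 := Finsupp.single_eq_same

@[simp] lemma sub_eLast_castSucc (b : Fin (n + 1) →₀ ℕ) (i : Fin n) :
    (b - eLast n) i.castSucc = b i.castSucc := by
  rw [Finsupp.tsub_apply, eLast_castSucc, Nat.sub_zero]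

@[simp] lemma sub_eLast_last (b : Fin (n + 1) →₀ ℕ) :
    (b - eLast n) (Fin.last n) = b (Fin.last n) - 1 := by
  rw [Finsupp.tsub_apply, eLast_last]

@[simp] lemma add_eLast_castSucc (b : Fin (n + 1) →₀ ℕ) (i : Fin n) :
    (b + eLast n) i.castSucc = b i.castSucc := by
  rw [Finsupp.add_apply, eLast_castSucc, Nat.add_zero]

@[simp] lemma add_eLast_last (b : Fin (n + 1) →₀ ℕ) :
    (b + eLast n) (Fin.last n) = b (Fin.last n) + 1 := by
  rw [Finsupp.add_apply, eLast_last]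

@[simp] lemma front_sub_eLast (b : Fin (n + 1) →₀ ℕ) : front (b - eLast n) = front b := by
  ext i; simp

lemma lift0_le_iff {a : Fin n →₀ ℕ} {b : Fin (n + 1) →₀ ℕ} :
    lift0 a ≤ b ↔ a ≤ front b := by
  simp only [Finsupp.le_def]
  constructor
  · intro h i
    simpa using h i.castSucc
  · intro h i
    rcases Fin.eq_castSucc_or_eq_last i with ⟨j, rfl⟩ | rfl
    · simpa using h j
    · simp

lemma add_eLast_le_iff {a b : Fin (n + 1) →₀ ℕ} :
    a + eLast n ≤ b ↔ 1 ≤ b (Fin.last n) ∧ a ≤ b - eLast n := by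
  simp only [Finsupp.le_def]
  constructor
  · intro h
    have hl := h (Fin.last n)
    rw [add_eLast_last] at hl
    refine ⟨by omega, fun i => ?_⟩
    rcases Fin.eq_castSucc_or_eq_last i with ⟨j, rfl⟩ | rfl
    · have := h j.castSucc
      simpa using this
    · rw [sub_eLast_last]; omega
  · rintro ⟨h1, h⟩ i
    rcases Fin.eq_castSucc_or_eq_last i with ⟨j, rfl⟩ | rfl
    · have := h j.castSucc
      simpa using this
    · have := h (Fin.last n)
      rw [sub_eLast_last] at this
      rw [add_eLast_last]
      omega

lemma last_not_mem_map (Z : Finset (Fin n)) :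
    Fin.last n ∉ Z.map Fin.castSuccEmb := by
  simp only [Finset.mem_map, not_exists]
  rintro j ⟨hj, hje⟩
  exact absurd hje (Fin.castSucc_lt_last j).ne

lemma mem_cell_lift {a : Fin n →₀ ℕ} {Z : Finset (Fin n)} {b : Fin (n + 1) →₀ ℕ} :
    b ∈ stanleyCell (lift0 a) (Z.map Fin.castSuccEmb) ↔
      b (Fin.last n) = 0 ∧ front b ∈ stanleyCell a Z := by
  simp only [stanleyCell, Set.mem_setOf_eq]
  constructor
  · rintro ⟨h1, h2⟩
    have hlast : b (Fin.last n) = 0 := by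
      have := h2 (Fin.last n) (last_not_mem_map Z)
      simpa using this
    refine ⟨hlast, fun i => ?_, fun i hi => ?_⟩
    · simpa using h1 i.castSucc
    · have hnot : i.castSucc ∉ Z.map Fin.castSuccEmb :=
        fun hmem => hi ((Finset.mem_map' _).mp hmem)
      have := h2 i.castSucc hnot
      simpa using this
  · rintro ⟨hlast, h1, h2⟩
    refine ⟨fun i => ?_, fun i hi => ?_⟩
    · rcases Fin.eq_castSucc_or_eq_last i with ⟨j, rfl⟩ | rfl
      · simpa using h1 j
      · simp
    · rcases Fin.eq_castSucc_or_eq_last i with ⟨j, rfl⟩ | rfl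
      · have : j ∉ Z := by
          intro hj
          exact hi (Finset.mem_map_of_mem _ hj)
        simpa using h2 j this
      · simpa using hlast

lemma mem_cell_shift {a : Fin (n + 1) →₀ ℕ} {Z : Finset (Fin (n + 1))} {b : Fin (n + 1) →₀ ℕ} :
    b ∈ stanleyCell (a + eLast n) Z ↔
      1 ≤ b (Fin.last n) ∧ b - eLast n ∈ stanleyCell a Z := by
  simp only [stanleyCell, Set.mem_setOf_eq]
  constructor
  · rintro ⟨h1, h2⟩
    have hl := h1 (Fin.last n)
    rw [add_eLast_last] at hl
    refine ⟨by omega, fun i => ?_, fun i hi => ?_⟩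
    · rcases Fin.eq_castSucc_or_eq_last i with ⟨j, rfl⟩ | rfl
      · have := h1 j.castSucc
        simpa using this
      · rw [sub_eLast_last]; omega
    · have := h2 i hi
      rcases Fin.eq_castSucc_or_eq_last i with ⟨j, rfl⟩ | rfl
      · rw [add_eLast_castSucc] at this
        rw [sub_eLast_castSucc, this]
      · rw [add_eLast_last] at this
        rw [sub_eLast_last, this]
        omega
  · rintro ⟨hb, h1, h2⟩
    refine ⟨fun i => ?_, fun i hi => ?_⟩
    · rcases Fin.eq_castSucc_or_eq_last i with ⟨j, rfl⟩ | rfl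
      · have := h1 j.castSucc
        rw [sub_eLast_castSucc] at this
        rw [add_eLast_castSucc]
        exact this
      · have := h1 (Fin.last n)
        rw [sub_eLast_last] at this
        rw [add_eLast_last]
        omega
    · have := h2 i hi
      rcases Fin.eq_castSucc_or_eq_last i with ⟨j, rfl⟩ | rfl
      · rw [sub_eLast_castSucc] at this
        rw [add_eLast_castSucc]
        exact this
      · rw [sub_eLast_last] at this
        rw [add_eLast_last]
        omega

/-- Glue a Stanley decomposition on the `x_n = 0` slice with a shifted one on `x_n ≥ 1`. -/
theorem glue {MI : Set (Fin n →₀ ℕ)} {MJ : Set (Fin (n + 1) →₀ ℕ)}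
    {DI : Finset ((Fin n →₀ ℕ) × Finset (Fin n))}
    {DJ : Finset ((Fin (n + 1) →₀ ℕ) × Finset (Fin (n + 1)))}
    (hDI : IsStanleyDecomp MI DI) (hDJ : IsStanleyDecomp MJ DJ) :
    IsStanleyDecomp
      ({b | b (Fin.last n) = 0 ∧ front b ∈ MI} ∪
        {b | 1 ≤ b (Fin.last n) ∧ b - eLast n ∈ MJ})
      ((DI.image fun p => (lift0 p.1, p.2.map Fin.castSuccEmb)) ∪
        (DJ.image fun p => (p.1 + eLast n, p.2))) := by
  obtain ⟨hI1, hI2⟩ := hDI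
  obtain ⟨hJ1, hJ2⟩ := hDJ
  constructor
  · intro p hp
    simp only [Finset.mem_union, Finset.mem_image] at hp
    rcases hp with ⟨q, hq, rfl⟩ | ⟨q, hq, rfl⟩
    · intro b hb
      rw [mem_cell_lift] at hb
      exact Or.inl ⟨hb.1, hI1 q hq hb.2⟩
    · intro b hb
      rw [mem_cell_shift] at hb
      exact Or.inr ⟨hb.1, hJ1 q hq hb.2⟩
  · intro b hb
    rcases hb with ⟨h0, hbI⟩ | ⟨h1, hbJ⟩
    · obtain ⟨q, ⟨hqD, hqc⟩, hquniq⟩ := hI2 _ hbI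
      refine ⟨(lift0 q.1, q.2.map Fin.castSuccEmb), ⟨?_, ?_⟩, ?_⟩
      · exact Finset.mem_union_left _ (Finset.mem_image_of_mem _ hqD)
      · rw [mem_cell_lift]; exact ⟨h0, hqc⟩
      · rintro p ⟨hp, hpc⟩
        simp only [Finset.mem_union, Finset.mem_image] at hp
        rcases hp with ⟨q', hq', rfl⟩ | ⟨q', hq', rfl⟩
        · rw [mem_cell_lift] at hpc
          rw [hquniq q' ⟨hq', hpc.2⟩]
        · rw [mem_cell_shift] at hpc
          obtain ⟨hp1, -⟩ := hpc
          omega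
    · obtain ⟨q, ⟨hqD, hqc⟩, hquniq⟩ := hJ2 _ hbJ
      refine ⟨(q.1 + eLast n, q.2), ⟨?_, ?_⟩, ?_⟩
      · exact Finset.mem_union_right _ (Finset.mem_image_of_mem _ hqD)
      · rw [mem_cell_shift]; exact ⟨h1, hqc⟩
      · rintro p ⟨hp, hpc⟩
        simp only [Finset.mem_union, Finset.mem_image] at hp
        rcases hp with ⟨q', hq', rfl⟩ | ⟨q', hq', rfl⟩
        · rw [mem_cell_lift] at hpc
          obtain ⟨hp1, -⟩ := hpc
          omega
        · rw [mem_cell_shift] at hpc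
          rw [hquniq q' ⟨hq', hpc.2⟩]

lemma mem_span_mono {K : Type} [Field K] {m : ℕ} {G : Set (Fin m →₀ ℕ)} {b : Fin m →₀ ℕ} :
    (monomial b (1 : K)) ∈ Ideal.span ((fun d => monomial d (1 : K)) '' G) ↔
      ∃ g ∈ G, g ≤ b := by
  rw [mem_ideal_span_monomial_image]
  simp [support_monomial]

lemma sdepthSet_pos_nonempty {m : ℕ} {M : Set (Fin m →₀ ℕ)} (h : 0 < sdepthSet M) :
    M.Nonempty := by
  by_contra hM
  rw [Set.not_nonempty_iff_eq_empty] at hM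
  subst hM
  have hub : ¬ BddAbove {k | ∃ D, IsStanleyDecomp (∅ : Set (Fin m →₀ ℕ)) D ∧
      ∀ p ∈ D, k ≤ p.2.card} := by
    rintro ⟨x, hx⟩
    have hmem : x + 1 ∈ {k | ∃ D, IsStanleyDecomp (∅ : Set (Fin m →₀ ℕ)) D ∧
        ∀ p ∈ D, k ≤ p.2.card} := by
      refine ⟨∅, ⟨?_, ?_⟩, ?_⟩
      · intro p hp; exact absurd hp (Finset.notMem_empty p)
      · intro b hb; exact absurd hb (Set.notMem_empty b)
      · intro p hp; exact absurd hp (Finset.notMem_empty p)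
    have := hx hmem
    omega
  rw [sdepthSet, csSup_of_not_bddAbove hub, csSup_empty] at h
  simp at h

lemma bddAbove_sdepth {m : ℕ} {M : Set (Fin m →₀ ℕ)} (h : M.Nonempty) :
    BddAbove {k | ∃ D, IsStanleyDecomp M D ∧ ∀ p ∈ D, k ≤ p.2.card} := by
  refine ⟨m, fun k hk => ?_⟩
  obtain ⟨D, hD, hcard⟩ := hk
  obtain ⟨b, hb⟩ := h
  obtain ⟨p, ⟨hpD, -⟩, -⟩ := hD.2 b hb
  calc k ≤ p.2.card := hcard p hpD
    _ ≤ (Finset.univ : Finset (Fin m)).card := Finset.card_le_card (Finset.subset_univ _)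
    _ = m := by simp

lemma exists_decomp {m : ℕ} {M : Set (Fin m →₀ ℕ)} (h : 0 < sdepthSet M) :
    ∃ D, IsStanleyDecomp M D ∧ ∀ p ∈ D, sdepthSet M ≤ p.2.card := by
  have hM := sdepthSet_pos_nonempty h
  have hbdd := bddAbove_sdepth hM
  have hne : ({k | ∃ D, IsStanleyDecomp M D ∧ ∀ p ∈ D, k ≤ p.2.card}).Nonempty := by
    by_contra hne
    rw [Set.not_nonempty_iff_eq_empty] at hne
    rw [sdepthSet, hne, csSup_empty] at h
    simp at h
  exact Nat.sSup_mem hne hbdd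

lemma extMap_monomial {K : Type} [Field K] {n : ℕ} (d : Fin n →₀ ℕ) :
    extMap K n (monomial d (1 : K)) = monomial (lift0 d) (1 : K) := by
  show rename Fin.castSucc (monomial d (1 : K)) = _
  rw [rename_monomial]
  rfl

lemma map_span_mono {K : Type} [Field K] {n : ℕ} (G : Set (Fin n →₀ ℕ)) :
    Ideal.map (extMap K n) (Ideal.span ((fun d => monomial d (1 : K)) '' G)) =
      Ideal.span ((fun d => monomial d (1 : K)) '' (lift0 '' G)) := by
  have hfun : (⇑(extMap K n) ∘ fun d : Fin n →₀ ℕ => monomial d (1 : K)) =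
      ((fun d => monomial d (1 : K)) ∘ lift0) := by
    funext d
    exact extMap_monomial d
  rw [Ideal.map_span, ← Set.image_comp, hfun, Set.image_comp]

lemma mul_span_mono {K : Type} [Field K] {n : ℕ} (S : Set (Fin (n + 1) →₀ ℕ)) :
    Ideal.span {(X (Fin.last n) : MvPolynomial (Fin (n + 1)) K)} *
        Ideal.span ((fun d => monomial d (1 : K)) '' S) =
      Ideal.span ((fun d => monomial d (1 : K)) '' ((fun d => d + eLast n) '' S)) := by
  have hfun : ((X (Fin.last n) * ·) ∘ fun d : Fin (n + 1) →₀ ℕ => monomial d (1 : K)) =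
      ((fun d => monomial d (1 : K)) ∘ fun d => d + eLast n) := by
    funext d
    show X (Fin.last n) * monomial d (1 : K) = monomial (d + eLast n) (1 : K)
    have hX : (X (Fin.last n) : MvPolynomial (Fin (n + 1)) K) = monomial (eLast n) 1 := by
      rw [eLast, ← X_pow_eq_monomial, pow_one]
    rw [hX, monomial_mul, one_mul]
    exact congrArg (fun t => (monomial t (1 : K))) (add_comm (eLast n) d)
  rw [Ideal.span_mul_span', Set.singleton_mul, ← Set.image_comp, hfun, Set.image_comp]

end SdepthAux

theorem sdepth_T_ge_min_I_JS {K : Type} [Field K] {n : ℕ}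
    (I J : Ideal (MvPolynomial (Fin n) K))
    (hI : IsMonomialIdeal I) (hJ : IsMonomialIdeal J) (hIJ : I < J) :
    sdepthIdeal (Ideal.map (extMap K n) I ⊔
        Ideal.span {X (Fin.last n)} * Ideal.map (extMap K n) J) ≥
      min (sdepthIdeal I) (sdepthIdeal (Ideal.map (extMap K n) J)) := by
  classical
  obtain ⟨GI, hGI⟩ := hI
  obtain ⟨GJ, hGJ⟩ := hJ
  -- the ideal `T` as a span of monomials
  have hTspan : Ideal.map (extMap K n) I ⊔
      Ideal.span {X (Fin.last n)} * Ideal.map (extMap K n) J =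
      Ideal.span ((fun d => monomial d (1 : K)) ''
        ((SdepthAux.lift0 '' GI) ∪
          ((fun d => d + SdepthAux.eLast n) '' (SdepthAux.lift0 '' GJ)))) := by
    rw [hGI, hGJ, SdepthAux.map_span_mono GI, SdepthAux.map_span_mono GJ,
      SdepthAux.mul_span_mono, ← Ideal.span_union, ← Set.image_union]
  -- membership characterizations
  have hmemI : ∀ d, d ∈ monoSet I ↔ ∃ g ∈ GI, g ≤ d := by
    intro d
    rw [monoSet, Set.mem_setOf_eq, hGI, SdepthAux.mem_span_mono]
  have hmemJ : ∀ d, d ∈ monoSet J ↔ ∃ g ∈ GJ, g ≤ d := by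
    intro d
    rw [monoSet, Set.mem_setOf_eq, hGJ, SdepthAux.mem_span_mono]
  have hmemJ' : ∀ d, d ∈ monoSet (Ideal.map (extMap K n) J) ↔
      ∃ g ∈ GJ, SdepthAux.lift0 g ≤ d := by
    intro d
    rw [monoSet, Set.mem_setOf_eq, hGJ, SdepthAux.map_span_mono GJ, SdepthAux.mem_span_mono]
    constructor
    · rintro ⟨g', ⟨g, hg, rfl⟩, h⟩
      exact ⟨g, hg, h⟩
    · rintro ⟨g, hg, h⟩
      exact ⟨_, ⟨g, hg, rfl⟩, h⟩
  -- the monomial set of `T`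
  have hmono : monoSet (Ideal.map (extMap K n) I ⊔
      Ideal.span {X (Fin.last n)} * Ideal.map (extMap K n) J) =
      ({b | b (Fin.last n) = 0 ∧ SdepthAux.front b ∈ monoSet I} ∪
        {b | 1 ≤ b (Fin.last n) ∧ b - SdepthAux.eLast n ∈ monoSet (Ideal.map (extMap K n) J)}) := by
    ext b
    rw [monoSet, Set.mem_setOf_eq, hTspan, SdepthAux.mem_span_mono]
    simp only [Set.mem_union, Set.mem_setOf_eq, hmemI, hmemJ']
    constructor
    · rintro ⟨g', hg', hle⟩
      rcases hg' with ⟨g, hg, rfl⟩ | ⟨g'', ⟨g, hg, rfl⟩, rfl⟩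
      · rcases Nat.eq_zero_or_pos (b (Fin.last n)) with hb0 | hb1
        · exact Or.inl ⟨hb0, g, hg, SdepthAux.lift0_le_iff.mp hle⟩
        · right
          refine ⟨hb1, ?_⟩
          have h1 : (monomial g (1 : K)) ∈ J := by
            refine hIJ.le ?_
            rw [hGI]
            exact SdepthAux.mem_span_mono.mpr ⟨g, hg, le_rfl⟩
          rw [hGJ] at h1
          obtain ⟨g', hg', hgg⟩ := SdepthAux.mem_span_mono.mp h1
          refine ⟨g', hg', SdepthAux.lift0_le_iff.mpr ?_⟩
          rw [SdepthAux.front_sub_eLast]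
          exact hgg.trans (SdepthAux.lift0_le_iff.mp hle)
      · have h := SdepthAux.add_eLast_le_iff.mp hle
        exact Or.inr ⟨h.1, g, hg, h.2⟩
    · rintro (⟨hb0, g, hg, hle⟩ | ⟨hb1, g, hg, hle⟩)
      · exact ⟨SdepthAux.lift0 g, Or.inl ⟨g, hg, rfl⟩,
          SdepthAux.lift0_le_iff.mpr hle⟩
      · exact ⟨SdepthAux.lift0 g + SdepthAux.eLast n,
          Or.inr ⟨SdepthAux.lift0 g, ⟨g, hg, rfl⟩, rfl⟩,
          SdepthAux.add_eLast_le_iff.mpr ⟨hb1, hle⟩⟩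
  rcases Nat.eq_zero_or_pos
      (min (sdepthIdeal I) (sdepthIdeal (Ideal.map (extMap K n) J))) with hmin | hmin
  · omega
  · have hposI : 0 < sdepthIdeal I := lt_of_lt_of_le hmin (min_le_left _ _)
    have hposJ : 0 < sdepthIdeal (Ideal.map (extMap K n) J) :=
      lt_of_lt_of_le hmin (min_le_right _ _)
    obtain ⟨DI, hDI, hcardI⟩ := SdepthAux.exists_decomp hposI
    obtain ⟨DJ, hDJ, hcardJ⟩ := SdepthAux.exists_decomp hposJ
    have hglue := SdepthAux.glue hDI hDJ
    rw [← hmono] at hglue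
    have hTne : (monoSet (Ideal.map (extMap K n) I ⊔
        Ideal.span {X (Fin.last n)} * Ideal.map (extMap K n) J)).Nonempty := by
      obtain ⟨b, hb⟩ := SdepthAux.sdepthSet_pos_nonempty hposJ
      refine ⟨b + SdepthAux.eLast n, ?_⟩
      rw [hmono]
      right
      refine ⟨?_, ?_⟩
      · rw [SdepthAux.add_eLast_last]
        omega
      · rw [add_tsub_cancel_right]
        exact hb
    have hk : min (sdepthIdeal I) (sdepthIdeal (Ideal.map (extMap K n) J)) ∈
        {k | ∃ D, IsStanleyDecomp (monoSet (Ideal.map (extMap K n) I ⊔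
          Ideal.span {X (Fin.last n)} * Ideal.map (extMap K n) J)) D ∧
            ∀ p ∈ D, k ≤ p.2.card} := by
      refine ⟨_, hglue, ?_⟩
      intro p hp
      simp only [Finset.mem_union, Finset.mem_image] at hp
      rcases hp with ⟨q, hq, rfl⟩ | ⟨q, hq, rfl⟩
      · have h := hcardI q hq
        simpa [sdepthIdeal] using le_trans (min_le_left _ _) h
      · exact le_trans (min_le_right _ _) (hcardJ q hq)
    exact le_csSup (SdepthAux.bddAbove_sdepth hTne) hk
end

section
/- Let S' = K[x_1,...,x_{n-1}], S = S'[x_n], I ⊊ J monomial ideals of S', and T = (I + x_n·J)S. Then sdepth_S(T) ≥ min{sdepth_S(JS/IS), sdepth_S(IS)}. -/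
open MvPolynomial

section Aux

variable {n : ℕ}

noncomputable def lf (s : Fin n →₀ ℕ) : Fin (n+1) →₀ ℕ := Finsupp.mapDomain Fin.castSucc s

noncomputable def ee (n : ℕ) : Fin (n+1) →₀ ℕ := Finsupp.single (Fin.last n) 1

lemma ee_castSucc (j : Fin n) : ee n (Fin.castSucc j) = 0 :=
  Finsupp.single_eq_of_ne' (Fin.castSucc_lt_last j).ne'

lemma ee_last : ee n (Fin.last n) = 1 := Finsupp.single_eq_same

lemma ee_of_ne {i : Fin (n+1)} (h : i ≠ Fin.last n) : ee n i = 0 :=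
  Finsupp.single_eq_of_ne' (Ne.symm h)

lemma lf_castSucc (s : Fin n →₀ ℕ) (j : Fin n) : lf s (Fin.castSucc j) = s j :=
  Finsupp.mapDomain_apply (Fin.castSucc_injective n) s j

lemma lf_last (s : Fin n →₀ ℕ) : lf s (Fin.last n) = 0 := by
  apply Finsupp.mapDomain_notin_range
  rintro ⟨j, hj⟩
  exact (Fin.castSucc_lt_last j).ne hj

lemma lf_le_iff (s : Fin n →₀ ℕ) (b : Fin (n+1) →₀ ℕ) :
    lf s ≤ b ↔ ∀ j, s j ≤ b (Fin.castSucc j) := by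
  rw [Finsupp.le_def]
  constructor
  · intro h j; simpa [lf_castSucc] using h (Fin.castSucc j)
  · intro h i
    induction i using Fin.lastCases with
    | last => simp [lf_last]
    | cast j => simpa [lf_castSucc] using h j

lemma shift_le_iff (s : Fin n →₀ ℕ) (b : Fin (n+1) →₀ ℕ) :
    ee n + lf s ≤ b ↔ 1 ≤ b (Fin.last n) ∧ ∀ j, s j ≤ b (Fin.castSucc j) := by
  rw [Finsupp.le_def]
  constructor
  · intro h
    refine ⟨by simpa [ee_last, lf_last] using h (Fin.last n), fun j => ?_⟩
    simpa [ee_castSucc, lf_castSucc] using h (Fin.castSucc j)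
  · rintro ⟨h1, h2⟩ i
    induction i using Fin.lastCases with
    | last => simpa [ee_last, lf_last] using h1
    | cast j => simpa [ee_castSucc, lf_castSucc] using h2 j

/-- exponent sets of extended monomial ideals -/
def MIset (G : Set (Fin n →₀ ℕ)) : Set (Fin (n+1) →₀ ℕ) := {b | ∃ s ∈ G, lf s ≤ b}

lemma add_ee_castSucc (b : Fin (n+1) →₀ ℕ) (j : Fin n) :
    (b + ee n) (Fin.castSucc j) = b (Fin.castSucc j) := by
  simp [Finsupp.add_apply, ee_castSucc]

lemma MIset_add_ee (G : Set (Fin n →₀ ℕ)) (b : Fin (n+1) →₀ ℕ) :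
    b + ee n ∈ MIset G ↔ b ∈ MIset G := by
  simp only [MIset, Set.mem_setOf_eq, lf_le_iff, add_ee_castSucc]

variable {K : Type} [Field K]

lemma map_span_eq (G : Set (Fin n →₀ ℕ)) :
    Ideal.map (extMap K n) (Ideal.span ((fun d => (monomial d (1 : K))) '' G)) =
      Ideal.span ((fun d => (monomial d (1 : K))) '' (lf '' G)) := by
  rw [Ideal.map_span]
  congr 1
  rw [Set.image_image, Set.image_image]
  apply Set.image_congr'
  intro d
  show (rename Fin.castSucc : MvPolynomial (Fin n) K →ₐ[K] _) (monomial d 1) = _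
  simp [rename_monomial, lf]

lemma monoSet_map (G : Set (Fin n →₀ ℕ)) :
    monoSet (Ideal.map (extMap K n) (Ideal.span ((fun d => (monomial d (1 : K))) '' G))) =
      MIset G := by
  ext b
  rw [monoSet, Set.mem_setOf_eq, map_span_eq, mem_ideal_span_monomial_image]
  classical
  simp [support_monomial, MIset]

lemma monoSet_T (GI GJ : Set (Fin n →₀ ℕ)) :
    monoSet (Ideal.map (extMap K n) (Ideal.span ((fun d => (monomial d (1 : K))) '' GI)) ⊔
        Ideal.span {X (Fin.last n)} *
          Ideal.map (extMap K n) (Ideal.span ((fun d => (monomial d (1 : K))) '' GJ))) =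
      MIset GI ∪ {b | 1 ≤ b (Fin.last n) ∧ b ∈ MIset GJ} := by
  have hprod : Ideal.span {(X (Fin.last n) : MvPolynomial (Fin (n+1)) K)} *
      Ideal.span ((fun d => (monomial d (1 : K))) '' (lf '' GJ)) =
      Ideal.span ((fun d => (monomial d (1 : K))) '' ((ee n + ·) '' (lf '' GJ))) := by
    rw [Ideal.span_mul_span', Set.singleton_mul, Set.image_image, Set.image_image]
    congr 1
    rw [Set.image_image, Set.image_image]
    apply Set.image_congr'
    intro d
    rw [X, monomial_mul, one_mul]
    rfl
  ext b
  rw [monoSet, Set.mem_setOf_eq, map_span_eq, map_span_eq, hprod, ← Ideal.span_union,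
    ← Set.image_union, mem_ideal_span_monomial_image]
  classical
  simp only [support_monomial, if_neg (one_ne_zero (α := K)), Finset.mem_singleton,
    forall_eq, Set.mem_union, Set.mem_image, Set.mem_setOf_eq]
  constructor
  · rintro ⟨si, (⟨s, hs, rfl⟩ | ⟨t, ⟨s, hs, rfl⟩, rfl⟩), hle⟩
    · exact Or.inl ⟨s, hs, hle⟩
    · rcases (shift_le_iff s b).1 hle with ⟨h1, h2⟩
      exact Or.inr ⟨h1, s, hs, (lf_le_iff s b).2 h2⟩
  · rintro (⟨s, hs, hle⟩ | ⟨h1, s, hs, hle⟩)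
    · exact ⟨lf s, Or.inl ⟨s, hs, rfl⟩, hle⟩
    · exact ⟨ee n + lf s, Or.inr ⟨lf s, ⟨s, hs, rfl⟩, rfl⟩,
        (shift_le_iff s b).2 ⟨h1, (lf_le_iff s b).1 hle⟩⟩

lemma cell_shift_mem {a c : Fin (n+1) →₀ ℕ} {Z : Finset (Fin (n+1))}
    (h : c ∈ stanleyCell a Z) : c + ee n ∈ stanleyCell (a + ee n) Z := by
  refine ⟨fun i => ?_, fun i hi => ?_⟩
  · simpa [Finsupp.add_apply] using add_le_add_right (h.1 i) (ee n i)
  · simp [Finsupp.add_apply, h.2 i hi]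

lemma cell_shift_inv {a b : Fin (n+1) →₀ ℕ} {Z : Finset (Fin (n+1))}
    (h : b ∈ stanleyCell (a + ee n) Z) : ∃ c ∈ stanleyCell a Z, b = c + ee n := by
  have key : ∀ i, a i + ee n i ≤ b i := fun i => by
    simpa [Finsupp.add_apply] using h.1 i
  refine ⟨b - ee n, ⟨fun i => ?_, fun i hi => ?_⟩, ?_⟩
  · rw [Finsupp.tsub_apply]; have := key i; omega
  · rw [Finsupp.tsub_apply]
    have h2 : b i = a i + ee n i := by simpa [Finsupp.add_apply] using h.2 i hi
    omega
  · ext i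
    rw [Finsupp.add_apply, Finsupp.tsub_apply]
    have := key i; omega

lemma decomp_shift [DecidableEq ((Fin (n+1) →₀ ℕ) × Finset (Fin (n+1)))]
    {M : Set (Fin (n+1) →₀ ℕ)} (hM : ∀ b, b + ee n ∈ M ↔ b ∈ M)
    {D : Finset ((Fin (n+1) →₀ ℕ) × Finset (Fin (n+1)))} (hD : IsStanleyDecomp M D) :
    IsStanleyDecomp {b | 1 ≤ b (Fin.last n) ∧ b ∈ M}
      (D.image (fun p => (p.1 + ee n, p.2))) := by
  constructor
  · intro p hp b hb
    rcases Finset.mem_image.1 hp with ⟨q, hq, rfl⟩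
    rcases cell_shift_inv hb with ⟨c, hc, rfl⟩
    refine ⟨?_, (hM c).2 (hD.1 q hq hc)⟩
    simp [Finsupp.add_apply, ee_last]
  · rintro b ⟨hb1, hb2⟩
    set c := b - ee n with hc
    have hbc : b = c + ee n := by
      ext i
      rw [Finsupp.add_apply, Finsupp.tsub_apply]
      rcases eq_or_ne i (Fin.last n) with rfl | hne
    -- at last: b last ≥ 1
      · rw [ee_last]; omega
      · rw [ee_of_ne hne]; omega
    have hcM : c ∈ M := (hM c).1 (hbc ▸ hb2)
    obtain ⟨p, ⟨hpD, hpc⟩, hpu⟩ := hD.2 c hcM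
    refine ⟨(p.1 + ee n, p.2), ⟨Finset.mem_image.2 ⟨p, hpD, rfl⟩, hbc ▸ cell_shift_mem hpc⟩, ?_⟩
    rintro q ⟨hqD, hqc⟩
    rcases Finset.mem_image.1 hqD with ⟨p', hp'D, rfl⟩
    rcases cell_shift_inv hqc with ⟨c', hc', hbc'⟩
    have : c' = c := by
      have := hbc'.symm.trans hbc
      exact add_right_cancel this
    rw [hpu p' ⟨hp'D, this ▸ hc'⟩]

lemma decomp_union [DecidableEq ((Fin (n+1) →₀ ℕ) × Finset (Fin (n+1)))]
    {M1 M2 : Set (Fin (n+1) →₀ ℕ)} (hdis : ∀ b, b ∈ M1 → b ∈ M2 → False)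
    {D1 D2 : Finset ((Fin (n+1) →₀ ℕ) × Finset (Fin (n+1)))}
    (h1 : IsStanleyDecomp M1 D1) (h2 : IsStanleyDecomp M2 D2) :
    IsStanleyDecomp (M1 ∪ M2) (D1 ∪ D2) := by
  constructor
  · intro p hp
    rcases Finset.mem_union.1 hp with h | h
    · exact (h1.1 p h).trans Set.subset_union_left
    · exact (h2.1 p h).trans Set.subset_union_right
  · rintro b (hb | hb)
    · obtain ⟨p, ⟨hpD, hpc⟩, hpu⟩ := h1.2 b hb
      refine ⟨p, ⟨Finset.mem_union_left _ hpD, hpc⟩, ?_⟩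
      rintro q ⟨hqD, hqc⟩
      rcases Finset.mem_union.1 hqD with h | h
      · exact hpu q ⟨h, hqc⟩
      · exact absurd (h2.1 q h hqc) (fun h' => hdis b hb h')
    · obtain ⟨p, ⟨hpD, hpc⟩, hpu⟩ := h2.2 b hb
      refine ⟨p, ⟨Finset.mem_union_right _ hpD, hpc⟩, ?_⟩
      rintro q ⟨hqD, hqc⟩
      rcases Finset.mem_union.1 hqD with h | h
      · exact absurd (h1.1 q h hqc) (fun h' => hdis b h' hb)
      · exact hpu q ⟨h, hqc⟩

end Aux

lemma sdepthSet_mem {m : ℕ} {M : Set (Fin m →₀ ℕ)} (h : 0 < sdepthSet M) :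
    ∃ D, IsStanleyDecomp M D ∧ ∀ p ∈ D, sdepthSet M ≤ p.2.card := by
  set S := {k | ∃ D, IsStanleyDecomp M D ∧ ∀ p ∈ D, k ≤ p.2.card} with hS
  have hne : S.Nonempty := by
    by_contra h'
    rw [Set.not_nonempty_iff_eq_empty] at h'
    rw [sdepthSet, ← hS, h', csSup_empty] at h
    exact lt_irrefl 0 h
  have hbdd : BddAbove S := by
    by_contra h'
    rw [sdepthSet, ← hS, csSup_of_not_bddAbove h', csSup_empty] at h
    exact lt_irrefl 0 h
  have := Nat.sSup_mem hne hbdd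
  rw [sdepthSet, ← hS]
  exact this


set_option maxHeartbeats 1000000 in
theorem sdepth_T_ge_min_JSmodIS_IS {K : Type} [Field K] {n : ℕ}
    (I J : Ideal (MvPolynomial (Fin n) K))
    (hI : IsMonomialIdeal I) (hJ : IsMonomialIdeal J) (hIJ : I < J) :
    sdepthIdeal (Ideal.map (extMap K n) I ⊔
        Ideal.span {X (Fin.last n)} * Ideal.map (extMap K n) J) ≥
      min (sdepthQuot (Ideal.map (extMap K n) I) (Ideal.map (extMap K n) J))
        (sdepthIdeal (Ideal.map (extMap K n) I)) := by
  classical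
  obtain ⟨GI, hGI⟩ := hI
  obtain ⟨GJ, hGJ⟩ := hJ
  subst hGI; subst hGJ
  rw [ge_iff_le]
  simp only [sdepthIdeal, sdepthQuot, monoSet_map, monoSet_T]
  set k := min (sdepthSet (MIset GJ \ MIset GI)) (sdepthSet (MIset GI)) with hk
  rcases Nat.eq_zero_or_pos k with h0 | hkpos
  · rw [h0]; exact Nat.zero_le _
  -- extract decompositions
  have hQpos : 0 < sdepthSet (MIset GJ \ MIset GI) := lt_of_lt_of_le hkpos (min_le_left _ _)
  have hIpos : 0 < sdepthSet (MIset GI : Set (Fin (n+1) →₀ ℕ)) :=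
    lt_of_lt_of_le hkpos (min_le_right _ _)
  obtain ⟨DQ, hDQ, hDQc⟩ := sdepthSet_mem hQpos
  obtain ⟨DI, hDI, hDIc⟩ := sdepthSet_mem hIpos
  -- invariance of MJ \ MI under shift
  have hMinv : ∀ b : Fin (n+1) →₀ ℕ, b + ee n ∈ MIset GJ \ MIset GI ↔ b ∈ MIset GJ \ MIset GI := by
    intro b
    simp [Set.mem_diff, MIset_add_ee]
  have hshift := decomp_shift hMinv hDQ
  have hdis : ∀ b : Fin (n+1) →₀ ℕ, b ∈ MIset GI →
      b ∈ {b | 1 ≤ b (Fin.last n) ∧ b ∈ MIset GJ \ MIset GI} → False := by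
    rintro b hb ⟨-, -, hb'⟩
    exact hb' hb
  have hunion := decomp_union hdis hDI hshift
  have hset : MIset GI ∪ {b : Fin (n+1) →₀ ℕ | 1 ≤ b (Fin.last n) ∧ b ∈ MIset GJ \ MIset GI} =
      MIset GI ∪ {b | 1 ≤ b (Fin.last n) ∧ b ∈ MIset GJ} := by
    ext b
    simp only [Set.mem_union, Set.mem_setOf_eq, Set.mem_diff]
    by_cases hb : b ∈ MIset GI <;> tauto
  rw [hset] at hunion
  -- the target set is nonempty
  have hGJne : GJ.Nonempty := by
    rcases Set.eq_empty_or_nonempty GJ with rfl | h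
    · rw [Set.image_empty, Ideal.span_empty] at hIJ
      exact absurd hIJ (not_lt_bot)
    · exact h
  obtain ⟨s, hs⟩ := hGJne
  have hb0 : (ee n + lf s) ∈ MIset GI ∪ {b : Fin (n+1) →₀ ℕ | 1 ≤ b (Fin.last n) ∧ b ∈ MIset GJ} := by
    refine Or.inr ⟨?_, ⟨s, hs, le_add_self⟩⟩
    rw [Finsupp.add_apply, ee_last]
    omega
  -- boundedness
  have hbdd : BddAbove {k' | ∃ D, IsStanleyDecomp
      (MIset GI ∪ {b : Fin (n+1) →₀ ℕ | 1 ≤ b (Fin.last n) ∧ b ∈ MIset GJ}) D ∧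
      ∀ p ∈ D, k' ≤ p.2.card} := by
    refine ⟨Fintype.card (Fin (n+1)), ?_⟩
    rintro k' ⟨D, hD, hc⟩
    obtain ⟨p, ⟨hpD, -⟩, -⟩ := hD.2 _ hb0
    exact (hc p hpD).trans (Finset.card_le_univ p.2)
  -- membership
  have hmem : k ∈ {k' | ∃ D, IsStanleyDecomp
      (MIset GI ∪ {b : Fin (n+1) →₀ ℕ | 1 ≤ b (Fin.last n) ∧ b ∈ MIset GJ}) D ∧
      ∀ p ∈ D, k' ≤ p.2.card} := by
    refine ⟨_, hunion, ?_⟩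
    intro p hp
    rcases Finset.mem_union.1 hp with h | h
    · exact le_trans (min_le_right _ _) (hDIc p h)
    · rcases Finset.mem_image.1 h with ⟨q, hq, rfl⟩
      exact le_trans (min_le_left _ _) (hDQc q hq)
  exact le_csSup hbdd hmem
end

section
/- Let S' = K[x_1,x_2,x_3], V = (x_1,x_2), U = V ∩ (x_1,x_3), S = S'[x_4], and W = (U + x_4V)S. Then depth_{S'}(V/U) = depth_{S'}(S'/U) = depth_{S'}(S'/V) = depth_S(S/W) = 1. -/
open MvPolynomial

section genaux
open Pointwise

lemma sSup_eq_one' {S : Set ℕ} (h1 : 1 ∈ S) (hb : ∀ k ∈ S, k ≤ 1) : sSup S = 1 :=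
  le_antisymm (csSup_le ⟨1, h1⟩ hb) (le_csSup ⟨1, hb⟩ h1)

section quot
variable {R : Type} [CommRing R]

lemma mk_smul' (I : Ideal R) (r x : R) :
    r • (Ideal.Quotient.mk I x) = Ideal.Quotient.mk I (r * x) := rfl

lemma mem_sup_span_iff (I : Ideal R) (r x : R) :
    x ∈ I ⊔ Ideal.span {r} ↔ ∃ u, x - r*u ∈ I := by
  rw [Submodule.mem_sup]
  constructor
  · rintro ⟨y, hy, z, hz, rfl⟩
    obtain ⟨u, rfl⟩ := Ideal.mem_span_singleton'.mp hz
    exact ⟨u, by rwa [mul_comm u r, add_sub_cancel_right]⟩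
  · rintro ⟨u, hu⟩
    exact ⟨x - r*u, hu, r*u, Ideal.mem_span_singleton'.mpr ⟨u, mul_comm u r⟩, by ring⟩

lemma t1 (I : Ideal R) (c : R) :
    IsSMulRegular (R ⧸ I) c ↔ ∀ x, c*x ∈ I → x ∈ I := by
  constructor
  · intro h x hx
    have : c • (Ideal.Quotient.mk I x) = c • (0 : R ⧸ I) := by
      rw [smul_zero, mk_smul']
      exact Ideal.Quotient.eq_zero_iff_mem.mpr hx
    have := h this
    rwa [← Ideal.Quotient.eq_zero_iff_mem]
  · intro h a b hab
    obtain ⟨x, rfl⟩ := Ideal.Quotient.mk_surjective a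
    obtain ⟨y, rfl⟩ := Ideal.Quotient.mk_surjective b
    have hab' : c • (Ideal.Quotient.mk I x) = c • (Ideal.Quotient.mk I y) := hab
    rw [mk_smul', mk_smul', ← sub_eq_zero, ← map_sub, Ideal.Quotient.eq_zero_iff_mem,
      ← mul_sub] at hab'
    have := h _ hab'
    rw [← sub_eq_zero, ← map_sub]
    exact Ideal.Quotient.eq_zero_iff_mem.mpr this

lemma mem_smul_top_iff {M : Type} [AddCommGroup M] [Module R M] (r : R) (x : M) :
    x ∈ r • (⊤ : Submodule R M) ↔ ∃ y, r • y = x := by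
  constructor
  · rintro ⟨y, -, rfl⟩; exact ⟨y, rfl⟩
  · rintro ⟨y, rfl⟩; exact Submodule.smul_mem_pointwise_smul y r ⊤ trivial

lemma t2 (I : Ideal R) (r s : R)
    (h : IsSMulRegular (QuotSMulTop r (R ⧸ I)) s) :
    ∀ x, s*x ∈ I ⊔ Ideal.span {r} → x ∈ I ⊔ Ideal.span {r} := by
  intro x hx
  obtain ⟨u, hu⟩ := (mem_sup_span_iff I r (s*x)).mp hx
  set p : Submodule R (R ⧸ I) := r • ⊤ with hp
  have key : s • (Submodule.Quotient.mk (p := p) (Ideal.Quotient.mk I x))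
      = s • (0 : QuotSMulTop r (R ⧸ I)) := by
    rw [smul_zero, ← Submodule.Quotient.mk_smul, Submodule.Quotient.mk_eq_zero, mk_smul', hp]
    refine (mem_smul_top_iff r _).mpr ⟨Ideal.Quotient.mk I u, ?_⟩
    rw [mk_smul', ← sub_eq_zero, ← map_sub, Ideal.Quotient.eq_zero_iff_mem]
    simpa using I.neg_mem hu
  have h0 := h key
  rw [Submodule.Quotient.mk_eq_zero, hp] at h0
  obtain ⟨y, hy⟩ := (mem_smul_top_iff r _).mp h0
  obtain ⟨v, rfl⟩ := Ideal.Quotient.mk_surjective y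
  rw [mk_smul'] at hy
  refine (mem_sup_span_iff I r x).mpr ⟨v, ?_⟩
  rw [← Ideal.Quotient.eq_zero_iff_mem, map_sub, sub_eq_zero, hy]

lemma t3 (I : Ideal R) (r : R) (h : (1:R) ∉ I ⊔ Ideal.span {r}) :
    (⊤ : Submodule R (R ⧸ I)) ≠ Ideal.span {r} • ⊤ := by
  intro htop
  rw [Submodule.ideal_span_singleton_smul] at htop
  have : (Ideal.Quotient.mk I 1) ∈ r • (⊤ : Submodule R (R ⧸ I)) := htop ▸ trivial
  obtain ⟨y, hy⟩ := (mem_smul_top_iff r _).mp this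
  obtain ⟨v, rfl⟩ := Ideal.Quotient.mk_surjective y
  rw [mk_smul'] at hy
  exact h ((mem_sup_span_iff I r 1).mpr ⟨v, Ideal.Quotient.eq_zero_iff_mem.mp
    (by rw [map_sub, sub_eq_zero, hy])⟩)

open RingTheory.Sequence in
lemma mdepth_quot_eq_one (m I : Ideal R) (r₀ : R) (h₀m : r₀ ∈ m)
    (h₀reg : ∀ x, r₀*x ∈ I → x ∈ I) (h₀prop : (1:R) ∉ I ⊔ Ideal.span {r₀})
    (hB : ∀ r ∈ m, ∀ s ∈ m, (∀ x, r*x ∈ I → x ∈ I) →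
      ¬ (∀ x, s*x ∈ I ⊔ Ideal.span {r} → x ∈ I ⊔ Ideal.span {r})) :
    mdepth m (R ⧸ I) = 1 := by
  apply sSup_eq_one'
  · refine ⟨[r₀], rfl, by simpa using h₀m, ?_⟩
    constructor
    · rw [isWeaklyRegular_cons_iff]
      exact ⟨(t1 I r₀).mpr h₀reg, IsWeaklyRegular.nil (R := R) _⟩
    · rw [Ideal.ofList_singleton]
      exact t3 I r₀ h₀prop
  · rintro k ⟨rs, rfl, hmem, hreg⟩
    by_contra hk
    push_neg at hk
    match rs, hk with
    | r :: s :: rest, _ =>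
      have hw := hreg.toIsWeaklyRegular
      rw [isWeaklyRegular_cons_iff] at hw
      obtain ⟨hr, hw2⟩ := hw
      rw [isWeaklyRegular_cons_iff] at hw2
      obtain ⟨hs, -⟩ := hw2
      exact hB r (hmem r (by simp)) s (hmem s (by simp)) ((t1 I r).mp hr)
        (t2 I r s hs)

lemma mdepth_congr {M N : Type} [AddCommGroup M] [Module R M] [AddCommGroup N] [Module R N]
    (m : Ideal R) (e : M ≃ₗ[R] N) : mdepth m M = mdepth m N := by
  unfold mdepth
  congr 1
  ext k
  constructor <;> rintro ⟨rs, h1, h2, h3⟩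
  · exact ⟨rs, h1, h2, (e.isRegular_congr rs).mp h3⟩
  · exact ⟨rs, h1, h2, (e.isRegular_congr rs).mpr h3⟩
end quot

section mvaux
open MvPolynomial
variable {K : Type} [Field K] {n : ℕ}



lemma monomial_eq_X_mul (i : Fin n) (d : Fin n →₀ ℕ) (hdi : d i ≠ 0) (c : K) :
    monomial d c = X i * monomial (d - Finsupp.single i 1) c := by
  have key : Finsupp.single i 1 + (d - Finsupp.single i 1) = d := by
    ext j
    simp only [Finsupp.add_apply, Finsupp.tsub_apply, Finsupp.single_apply]
    split_ifs with h
    · subst h; omega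
    · omega
  rw [X, monomial_mul, one_mul, key]

lemma mem_span_range_X_iff (p : MvPolynomial (Fin n) K) :
    p ∈ Ideal.span (Set.range (X : Fin n → MvPolynomial (Fin n) K)) ↔ constantCoeff p = 0 := by
  constructor
  · intro hp
    have hle : Ideal.span (Set.range (X : Fin n → MvPolynomial (Fin n) K)) ≤
        RingHom.ker (constantCoeff (σ := Fin n) (R := K)) := by
      rw [Ideal.span_le]
      rintro _ ⟨i, rfl⟩
      simp [RingHom.mem_ker]
    exact hle hp
  · intro hp
    rw [as_sum p]
    apply Ideal.sum_mem
    intro v hv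
    by_cases hv0 : v = 0
    · subst hv0
      have : coeff 0 p = 0 := hp
      simp [this]
    · obtain ⟨i, hi⟩ := Finsupp.ne_iff.mp hv0
      simp only [Finsupp.coe_zero, Pi.zero_apply] at hi
      rw [monomial_eq_X_mul i v hi]
      exact Ideal.mul_mem_right _ _ (Ideal.subset_span ⟨i, rfl⟩)

noncomputable def onlyVar (j : Fin n) : MvPolynomial (Fin n) K →ₐ[K] Polynomial K :=
  aeval (fun i => if i = j then Polynomial.X else 0)

lemma onlyVar_X (j i : Fin n) :
    onlyVar (K := K) j (X i) = if i = j then Polynomial.X else 0 := by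
  simp [onlyVar]

lemma onlyVar_monomial (j : Fin n) (d : Fin n →₀ ℕ) (c : K) :
    onlyVar (K := K) j (monomial d c) =
      if d.support ⊆ {j} then Polynomial.C c * Polynomial.X ^ (d j) else 0 := by
  rw [onlyVar, aeval_monomial]
  by_cases h : d.support ⊆ {j}
  · rw [if_pos h]
    have hd : d = Finsupp.single j (d j) := Finsupp.support_subset_singleton.mp h
    rw [hd]
    rw [Finsupp.prod_single_index (h := fun i k => (if i = j then Polynomial.X else (0 : Polynomial K)) ^ k) (by simp)]
    simp [Finsupp.single_apply, Polynomial.algebraMap_eq]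
  · rw [if_neg h]
    obtain ⟨i, hi, hij'⟩ := Finset.not_subset.mp h
    have hij : i ≠ j := by simpa using hij'
    have : (fun i k => (if i = j then Polynomial.X else (0 : Polynomial K)) ^ k) i (d i) = 0 := by
      simp only [if_neg hij]
      exact zero_pow (Finsupp.mem_support_iff.mp hi)
    rw [Finsupp.prod, Finset.prod_eq_zero hi this, mul_zero]

lemma coeff_onlyVar (j : Fin n) (f : MvPolynomial (Fin n) K) (a : ℕ) :
    (onlyVar (K := K) j f).coeff a = coeff (Finsupp.single j a) f := by
  conv_lhs => rw [as_sum f]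
  rw [map_sum, Polynomial.finset_sum_coeff]
  have step : ∀ v ∈ f.support,
      (onlyVar (K := K) j (monomial v (coeff v f))).coeff a =
      if v = Finsupp.single j a then coeff v f else 0 := by
    intro v hv
    rw [onlyVar_monomial]
    by_cases h : v.support ⊆ {j}
    · rw [if_pos h]
      have hd : v = Finsupp.single j (v j) := Finsupp.support_subset_singleton.mp h
      rw [Polynomial.coeff_C_mul, Polynomial.coeff_X_pow]
      by_cases hja : a = v j
      · rw [if_pos hja, mul_one, if_pos (by rw [hd, ← hja])]
      · rw [if_neg hja, mul_zero, if_neg]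
        intro hva
        exact hja (by rw [hva]; simp)
    · rw [if_neg h, Polynomial.coeff_zero, if_neg]
      intro hva
      subst hva
      exact h (Finsupp.support_single_subset)
  rw [Finset.sum_congr rfl step, Finset.sum_ite_eq' f.support (Finsupp.single j a)
    (fun v => coeff v f)]
  by_cases hmem : Finsupp.single j a ∈ f.support
  · rw [if_pos hmem]
  · rw [if_neg hmem, eq_comm]
    exact notMem_support_iff.mp hmem

lemma onlyVar_eq_zero_iff (j : Fin n) (f : MvPolynomial (Fin n) K) :
    onlyVar (K := K) j f = 0 ↔ f ∈ Ideal.span ((X : Fin n → _) '' {i | i ≠ j}) := by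
  constructor
  · intro h
    rw [as_sum f]
    apply Ideal.sum_mem
    intro v hv
    by_cases hs : v.support ⊆ {j}
    · have : coeff v f = 0 := by
        have hd : v = Finsupp.single j (v j) := Finsupp.support_subset_singleton.mp hs
        rw [hd, ← coeff_onlyVar, h, Polynomial.coeff_zero]
      simp [this]
    · obtain ⟨i, hi, hij'⟩ := Finset.not_subset.mp hs
      have hij : i ≠ j := by simpa using hij'
      rw [monomial_eq_X_mul i v (Finsupp.mem_support_iff.mp hi)]
      exact Ideal.mul_mem_right _ _ (Ideal.subset_span ⟨i, hij, rfl⟩)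
  · intro h
    have hle : Ideal.span ((X : Fin n → _) '' {i | i ≠ j}) ≤
        RingHom.ker (onlyVar (K := K) j).toRingHom := by
      rw [Ideal.span_le]
      rintro _ ⟨i, hi, rfl⟩
      simp only [SetLike.mem_coe, RingHom.mem_ker, AlgHom.toRingHom_eq_coe, RingHom.coe_coe]
      rw [onlyVar_X, if_neg hi]
    exact hle h

noncomputable def killTo (T : Finset (Fin n)) :
    MvPolynomial (Fin n) K →ₐ[K] MvPolynomial (Fin n) K :=
  aeval (fun i => if i ∈ T then 0 else X i)

lemma killTo_X (T : Finset (Fin n)) (i : Fin n) :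
    killTo (K := K) T (X i) = if i ∈ T then 0 else X i := by
  simp [killTo]

lemma killTo_monomial (T : Finset (Fin n)) (d : Fin n →₀ ℕ) (c : K) :
    killTo (K := K) T (monomial d c) =
      if ∀ i ∈ T, d i = 0 then monomial d c else 0 := by
  rw [killTo, aeval_monomial]
  by_cases h : ∀ i ∈ T, d i = 0
  · rw [if_pos h]
    have hprod : (d.prod fun i k => (if i ∈ T then 0 else X i) ^ k) =
        d.prod fun i k => (X i : MvPolynomial (Fin n) K) ^ k := by
      apply Finsupp.prod_congr
      intro i hi
      rw [if_neg fun hiT => (Finsupp.mem_support_iff.mp hi) (h i hiT)]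
    rw [show (d.prod fun i k => (if i ∈ T then (0 : MvPolynomial (Fin n) K) else X i) ^ k) =
        d.prod fun i k => (X i : MvPolynomial (Fin n) K) ^ k from hprod,
      monomial_eq, MvPolynomial.algebraMap_eq]
  · rw [if_neg h]
    push_neg at h
    obtain ⟨i, hiT, hdi⟩ := h
    have hi : i ∈ d.support := Finsupp.mem_support_iff.mpr hdi
    have : (fun i k => (if i ∈ T then (0 : MvPolynomial (Fin n) K) else X i) ^ k) i (d i) = 0 := by
      simp only [if_pos hiT]
      exact zero_pow hdi
    rw [Finsupp.prod, Finset.prod_eq_zero hi this, mul_zero]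

lemma coeff_killTo (T : Finset (Fin n)) (f : MvPolynomial (Fin n) K)
    (d : Fin n →₀ ℕ) (hd : ∀ i ∈ T, d i = 0) :
    coeff d (killTo (K := K) T f) = coeff d f := by
  conv_lhs => rw [as_sum f]
  rw [map_sum]
  rw [MvPolynomial.coeff_sum]
  have step : ∀ v ∈ f.support,
      coeff d (killTo (K := K) T (monomial v (coeff v f))) =
      if v = d then coeff v f else 0 := by
    intro v hv
    rw [killTo_monomial]
    by_cases h : ∀ i ∈ T, v i = 0
    · rw [if_pos h, coeff_monomial]
    · rw [if_neg h, coeff_zero, if_neg]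
      rintro rfl
      exact h hd
  rw [Finset.sum_congr rfl step, Finset.sum_ite_eq' f.support d (fun v => coeff v f)]
  by_cases hmem : d ∈ f.support
  · rw [if_pos hmem]
  · rw [if_neg hmem, eq_comm]
    exact notMem_support_iff.mp hmem


lemma onlyVar_surjective {n : ℕ} (j : Fin n) : Function.Surjective (onlyVar (K := K) j) := by
  intro p
  refine ⟨Polynomial.aeval (X j) p, ?_⟩
  rw [← Polynomial.aeval_algHom_apply]
  simp [onlyVar]

lemma onlyVar_coeff0 {n : ℕ} (j : Fin n) (f : MvPolynomial (Fin n) K) :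
    (onlyVar (K := K) j f).coeff 0 = constantCoeff f := by
  rw [coeff_onlyVar, Finsupp.single_zero]
  rfl

lemma constantCoeff_killTo {n : ℕ} (T : Finset (Fin n)) (f : MvPolynomial (Fin n) K) :
    constantCoeff (killTo (K := K) T f) = constantCoeff f := by
  have := coeff_killTo (K := K) T f 0 (by simp)
  simpa [constantCoeff_eq] using this

lemma img2 : (X : Fin 3 → MvPolynomial (Fin 3) K) '' {i | i ≠ 2} = {X 0, X 1} := by
  ext p
  simp only [Set.mem_image, Set.mem_setOf_eq, Set.mem_insert_iff, Set.mem_singleton_iff]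
  constructor
  · rintro ⟨i, hi, rfl⟩
    fin_cases i <;> simp_all
  · rintro (rfl | rfl)
    · exact ⟨0, by decide, rfl⟩
    · exact ⟨1, by decide, rfl⟩

lemma img1 : (X : Fin 3 → MvPolynomial (Fin 3) K) '' {i | i ≠ 1} = {X 0, X 2} := by
  ext p
  simp only [Set.mem_image, Set.mem_setOf_eq, Set.mem_insert_iff, Set.mem_singleton_iff]
  constructor
  · rintro ⟨i, hi, rfl⟩
    fin_cases i <;> simp_all
  · rintro (rfl | rfl)
    · exact ⟨0, by decide, rfl⟩
    · exact ⟨2, by decide, rfl⟩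

lemma img14 : (X : Fin 4 → MvPolynomial (Fin 4) K) '' {i | i ≠ 1} = {X 0, X 2, X 3} := by
  ext p
  simp only [Set.mem_image, Set.mem_setOf_eq, Set.mem_insert_iff, Set.mem_singleton_iff]
  constructor
  · rintro ⟨i, hi, rfl⟩
    fin_cases i <;> simp_all
  · rintro (rfl | rfl | rfl)
    · exact ⟨0, by decide, rfl⟩
    · exact ⟨2, by decide, rfl⟩
    · exact ⟨3, by decide, rfl⟩

end mvaux

section core
variable {R K : Type} [CommRing R] [Field K]

-- helper copied (will be in same file)
lemma mem_sup_span_iff' (I : Ideal R) (r x : R) :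
    x ∈ I ⊔ Ideal.span {r} ↔ ∃ u, x - r*u ∈ I := by
  rw [Submodule.mem_sup]
  constructor
  · rintro ⟨y, hy, z, hz, rfl⟩
    obtain ⟨u, rfl⟩ := Ideal.mem_span_singleton'.mp hz
    exact ⟨u, by rwa [mul_comm u r, add_sub_cancel_right]⟩
  · rintro ⟨u, hu⟩
    exact ⟨x - r*u, hu, r*u, Ideal.mem_span_singleton'.mpr ⟨u, mul_comm u r⟩, by ring⟩

lemma unit_coeff_zero {p : Polynomial K} (h : IsUnit p) : p.coeff 0 ≠ 0 := by
  obtain ⟨r, hr, rfl⟩ := Polynomial.isUnit_iff.mp h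
  simpa using hr.ne_zero

lemma corePoly (π : R →+* Polynomial K) (hsurj : Function.Surjective π)
    (I : Ideal R) (hI : ∀ x, x ∈ I ↔ π x = 0)
    (r s : R) (hr0 : (π r).coeff 0 = 0) (hs0 : (π s).coeff 0 = 0)
    (hreg : ∀ x, r*x ∈ I → x ∈ I) :
    ¬ (∀ x, s*x ∈ I ⊔ Ideal.span {r} → x ∈ I ⊔ Ideal.span {r}) := by
  intro hcon
  obtain ⟨x₁, hx₁⟩ := hsurj 1
  have hπr : π r ≠ 0 := by
    intro h0
    have : r * x₁ ∈ I := (hI _).mpr (by rw [map_mul, h0, zero_mul])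
    have : π x₁ = 0 := (hI _).mp (hreg _ this)
    rw [hx₁] at this
    exact one_ne_zero this
  by_cases hπs : π s = 0
  · -- witness x₁
    have h1 : s * x₁ ∈ I ⊔ Ideal.span {r} :=
      Ideal.mem_sup_left ((hI _).mpr (by rw [map_mul, hπs, zero_mul]))
    obtain ⟨u, hu⟩ := (mem_sup_span_iff' I r x₁).mp (hcon x₁ h1)
    have : (1 : Polynomial K) = π r * π u := by
      have := (hI _).mp hu
      rw [map_sub, map_mul, sub_eq_zero, hx₁] at this
      exact this
    have : (1 : Polynomial K).coeff 0 = 0 := by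
      rw [this, Polynomial.mul_coeff_zero, hr0, zero_mul]
    simpa using this
  · classical
    have hXr : Polynomial.X ∣ π r := Polynomial.X_dvd_iff.mpr hr0
    have hXs : Polynomial.X ∣ π s := Polynomial.X_dvd_iff.mpr hs0
    obtain ⟨d, hXd, r', s', hr', hs'⟩ : ∃ d, Polynomial.X ∣ d ∧
        ∃ r' s', π r = d * r' ∧ π s = d * s' := by
      refine ⟨EuclideanDomain.gcd (π r) (π s), EuclideanDomain.dvd_gcd hXr hXs, ?_⟩
      obtain ⟨r', hr'⟩ := EuclideanDomain.gcd_dvd_left (π r) (π s)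
      obtain ⟨s', hs'⟩ := EuclideanDomain.gcd_dvd_right (π r) (π s)
      exact ⟨r', s', hr', hs'⟩
    obtain ⟨a, ha⟩ := hsurj r'
    obtain ⟨b, hb⟩ := hsurj s'
    have hsa : s * a ∈ I ⊔ Ideal.span {r} := by
      refine (mem_sup_span_iff' I r (s*a)).mpr ⟨b, (hI _).mpr ?_⟩
      rw [map_sub, map_mul, map_mul, ha, hb, sub_eq_zero]
      linear_combination r' * hs' - s' * hr'
    obtain ⟨u, hu⟩ := (mem_sup_span_iff' I r a).mp (hcon a hsa)
    have heq : r' = π r * π u := by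
      have := (hI _).mp hu
      rwa [map_sub, map_mul, sub_eq_zero, ha] at this
    have hr'0 : r' ≠ 0 := by
      intro h0
      rw [h0, mul_zero] at hr'
      exact hπr hr'
    have hdu : d * π u = 1 := by
      have : r' * 1 = r' * (d * π u) := by linear_combination heq + π u * hr'
      exact (mul_left_cancel₀ hr'0 this).symm
    exact Polynomial.not_isUnit_X (isUnit_of_dvd_one (hXd.trans ⟨π u, hdu.symm⟩))

lemma corePull {A : Type} [CommRing A] [IsDomain A]
    (π₁ : R →+* A) (π₂ : R →+* Polynomial K) (ε : A →+* K)
    (hcomp : ∀ x, ε (π₁ x) = (π₂ x).coeff 0)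
    (hsurj : Function.Surjective π₂)
    (y : R) (hy1 : π₁ y = 0) (hy2 : π₂ y = Polynomial.X)
    (z : R) (hz2 : π₂ z = 0) (hz1 : π₁ z ≠ 0)
    (I : Ideal R) (hI : ∀ x, x ∈ I ↔ (π₁ x = 0 ∧ π₂ x = 0))
    (r s : R) (hr0 : (π₂ r).coeff 0 = 0) (hs0 : (π₂ s).coeff 0 = 0)
    (hreg : ∀ x, r*x ∈ I → x ∈ I) :
    ¬ (∀ x, s*x ∈ I ⊔ Ideal.span {r} → x ∈ I ⊔ Ideal.span {r}) := by
  intro hcon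
  have hπ2r : π₂ r ≠ 0 := by
    intro h0
    have : r * y ∈ I := (hI _).mpr ⟨by rw [map_mul, hy1, mul_zero],
      by rw [map_mul, h0, zero_mul]⟩
    have := ((hI _).mp (hreg _ this)).2
    rw [hy2] at this
    exact Polynomial.X_ne_zero this
  have hπ1r : π₁ r ≠ 0 := by
    intro h0
    have : r * z ∈ I := (hI _).mpr ⟨by rw [map_mul, h0, zero_mul],
      by rw [map_mul, hz2, mul_zero]⟩
    exact hz1 ((hI _).mp (hreg _ this)).1
  have hXr : Polynomial.X ∣ π₂ r := Polynomial.X_dvd_iff.mpr hr0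
  by_cases hπs : π₂ s = 0
  · -- witness y
    have h1 : s * y ∈ I ⊔ Ideal.span {r} := Ideal.mem_sup_left ((hI _).mpr
      ⟨by rw [map_mul, hy1, mul_zero], by rw [map_mul, hπs, zero_mul]⟩)
    obtain ⟨u, hu⟩ := (mem_sup_span_iff' I r y).mp (hcon y h1)
    obtain ⟨h1', h2'⟩ := (hI _).mp hu
    rw [map_sub, map_mul, hy1, zero_sub, neg_eq_zero, mul_eq_zero] at h1'
    have hu1 : π₁ u = 0 := h1'.resolve_left hπ1r
    have hu0 : (π₂ u).coeff 0 = 0 := by rw [← hcomp, hu1, map_zero]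
    have hXu : Polynomial.X ∣ π₂ u := Polynomial.X_dvd_iff.mpr hu0
    rw [map_sub, map_mul, hy2, sub_eq_zero] at h2'
    -- X = π₂ r * π₂ u, X ∣ π₂ r, X ∣ π₂ u ⇒ X² ∣ X, contradiction
    obtain ⟨a, ha⟩ := hXr
    obtain ⟨b, hb⟩ := hXu
    rw [ha, hb] at h2'
    have : Polynomial.X * (1 : Polynomial K) = Polynomial.X * (Polynomial.X * (a*b)) := by
      linear_combination h2'
    have := mul_left_cancel₀ (Polynomial.X_ne_zero) this
    exact Polynomial.not_isUnit_X (IsUnit.of_mul_eq_one _ this.symm)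
  · classical
    have hXs : Polynomial.X ∣ π₂ s := Polynomial.X_dvd_iff.mpr hs0
    obtain ⟨d, hXd, r', s', hr', hs'⟩ : ∃ d, Polynomial.X ∣ d ∧
        ∃ r' s', π₂ r = d * r' ∧ π₂ s = d * s' := by
      refine ⟨EuclideanDomain.gcd (π₂ r) (π₂ s), EuclideanDomain.dvd_gcd hXr hXs, ?_⟩
      obtain ⟨r', hr'⟩ := EuclideanDomain.gcd_dvd_left (π₂ r) (π₂ s)
      obtain ⟨s', hs'⟩ := EuclideanDomain.gcd_dvd_right (π₂ r) (π₂ s)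
      exact ⟨r', s', hr', hs'⟩
    obtain ⟨a, ha⟩ := hsurj r'
    obtain ⟨b, hb⟩ := hsurj s'
    have hr'0 : r' ≠ 0 := by
      intro h0; rw [h0, mul_zero] at hr'; exact hπ2r hr'
    have hsa : s * (y*a) ∈ I ⊔ Ideal.span {r} := by
      refine (mem_sup_span_iff' I r _).mpr ⟨y*b, (hI _).mpr ⟨?_, ?_⟩⟩
      · rw [map_sub, map_mul, map_mul, map_mul, map_mul, hy1]; ring
      · rw [map_sub, map_mul, map_mul, map_mul, map_mul, hy2, ha, hb, sub_eq_zero]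
        linear_combination (Polynomial.X * r') * hs' - (Polynomial.X * s') * hr'
    obtain ⟨u, hu⟩ := (mem_sup_span_iff' I r (y*a)).mp (hcon _ hsa)
    obtain ⟨h1', h2'⟩ := (hI _).mp hu
    rw [map_sub, map_mul, map_mul, hy1, zero_mul, zero_sub, neg_eq_zero, mul_eq_zero] at h1'
    have hu1 : π₁ u = 0 := h1'.resolve_left hπ1r
    have hu0 : (π₂ u).coeff 0 = 0 := by rw [← hcomp, hu1, map_zero]
    obtain ⟨w, hw⟩ := Polynomial.X_dvd_iff.mpr hu0
    rw [map_sub, map_mul, map_mul, hy2, ha, sub_eq_zero, hr', hw] at h2'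
    -- X * r' = d * r' * (X * w)
    have : r' * (Polynomial.X * 1) = r' * (Polynomial.X * (d * w)) := by
      linear_combination h2'
    have h3 := mul_left_cancel₀ hr'0 this
    have h4 := mul_left_cancel₀ (Polynomial.X_ne_zero (R := K)) h3
    exact Polynomial.not_isUnit_X
      (isUnit_of_dvd_one (hXd.trans (Dvd.intro _ h4.symm)))
end core
end genaux


section modules
open MvPolynomial Polynomial
variable {K : Type} [Field K]

lemma constCoeff_of_mem_max {n : ℕ} {p : MvPolynomial (Fin n) K} (hp : p ∈ maxIdeal K n) :
    constantCoeff p = 0 := (mem_span_range_X_iff p).mp hp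

lemma X_mem_max {n : ℕ} (i : Fin n) : X i ∈ maxIdeal K n := Ideal.subset_span ⟨i, rfl⟩

lemma one_not_mem_max {n : ℕ} : (1 : MvPolynomial (Fin n) K) ∉ maxIdeal K n := by
  intro h
  simpa using constCoeff_of_mem_max h

lemma one_not_mem_sup {n : ℕ} (I : Ideal (MvPolynomial (Fin n) K)) (hI : I ≤ maxIdeal K n)
    (r : MvPolynomial (Fin n) K) (hr : r ∈ maxIdeal K n) :
    (1 : MvPolynomial (Fin n) K) ∉ I ⊔ Ideal.span {r} := by
  intro h
  refine one_not_mem_max (sup_le hI (Ideal.span_le.mpr ?_) h)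
  simpa using hr

lemma memV_iff (f : MvPolynomial (Fin 3) K) :
    f ∈ (Ideal.span {X 0, X 1} : Ideal (MvPolynomial (Fin 3) K)) ↔ onlyVar (K := K) 2 f = 0 := by
  rw [onlyVar_eq_zero_iff, img2]

lemma memJ1_iff (f : MvPolynomial (Fin 3) K) :
    f ∈ (Ideal.span {X 0, X 2} : Ideal (MvPolynomial (Fin 3) K)) ↔ onlyVar (K := K) 1 f = 0 := by
  rw [onlyVar_eq_zero_iff, img1]

lemma memU_iff (f : MvPolynomial (Fin 3) K) :
    f ∈ (Ideal.span {X 0, X 1} ⊓ Ideal.span {X 0, X 2} : Ideal (MvPolynomial (Fin 3) K)) ↔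
      (onlyVar (K := K) 1 f = 0 ∧ onlyVar (K := K) 2 f = 0) := by
  rw [Submodule.mem_inf, memV_iff, memJ1_iff, and_comm]

lemma V_le_max : (Ideal.span {X 0, X 1} : Ideal (MvPolynomial (Fin 3) K)) ≤ maxIdeal K 3 := by
  rw [Ideal.span_le]
  rintro p (rfl | rfl)
  · exact X_mem_max 0
  · exact X_mem_max 1

lemma J1_le_max : (Ideal.span {X 0, X 2} : Ideal (MvPolynomial (Fin 3) K)) ≤ maxIdeal K 3 := by
  rw [Ideal.span_le]
  rintro p (rfl | rfl)
  · exact X_mem_max 0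
  · exact X_mem_max 2

lemma onlyVar_X_self {n : ℕ} (j : Fin n) : onlyVar (K := K) j (X j) = Polynomial.X := by
  simp [onlyVar]

lemma onlyVar_X_ne {n : ℕ} {i j : Fin n} (h : i ≠ j) : onlyVar (K := K) j (X i) = 0 := by
  simp [onlyVar, h]

lemma depthV : mdepth (maxIdeal K 3)
    (MvPolynomial (Fin 3) K ⧸ (Ideal.span {X 0, X 1} : Ideal (MvPolynomial (Fin 3) K))) = 1 := by
  have hregX2 : ∀ r : MvPolynomial (Fin 3) K, onlyVar (K := K) 2 r ≠ 0 →
      ∀ x, r * x ∈ (Ideal.span {X 0, X 1} : Ideal (MvPolynomial (Fin 3) K)) →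
        x ∈ (Ideal.span {X 0, X 1} : Ideal (MvPolynomial (Fin 3) K)) := by
    intro r hr x hx
    rw [memV_iff] at hx ⊢
    rw [map_mul] at hx
    exact (mul_eq_zero.mp hx).resolve_left hr
  apply mdepth_quot_eq_one (maxIdeal K 3) _ (X 2) (X_mem_max 2)
  · apply hregX2
    rw [onlyVar_X_self]
    exact Polynomial.X_ne_zero
  · exact one_not_mem_sup _ V_le_max _ (X_mem_max 2)
  · intro r hr s hs hreg
    exact corePoly (onlyVar (K := K) 2).toRingHom (onlyVar_surjective 2) _ memV_iff r s
      (by show ((onlyVar (K := K) 2) r).coeff 0 = 0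
          rw [onlyVar_coeff0]; exact constCoeff_of_mem_max hr)
      (by show ((onlyVar (K := K) 2) s).coeff 0 = 0
          rw [onlyVar_coeff0]; exact constCoeff_of_mem_max hs) hreg

lemma depthU : mdepth (maxIdeal K 3)
    (MvPolynomial (Fin 3) K ⧸
      (Ideal.span {X 0, X 1} ⊓ Ideal.span {X 0, X 2} : Ideal (MvPolynomial (Fin 3) K))) = 1 := by
  have e1 : onlyVar (K := K) 1 ((X 1 + X 2 : MvPolynomial (Fin 3) K)) = Polynomial.X := by
    rw [map_add, onlyVar_X_self, onlyVar_X_ne (by decide), add_zero]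
  have e2 : onlyVar (K := K) 2 ((X 1 + X 2 : MvPolynomial (Fin 3) K)) = Polynomial.X := by
    rw [map_add, onlyVar_X_self, onlyVar_X_ne (by decide), zero_add]
  apply mdepth_quot_eq_one (maxIdeal K 3) _ (X 1 + X 2)
    (Ideal.add_mem _ (X_mem_max 1) (X_mem_max 2))
  · intro x hx
    rw [memU_iff] at hx ⊢
    rw [map_mul, map_mul, e1, e2] at hx
    exact ⟨(mul_eq_zero.mp hx.1).resolve_left Polynomial.X_ne_zero,
      (mul_eq_zero.mp hx.2).resolve_left Polynomial.X_ne_zero⟩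
  · exact one_not_mem_sup _ (le_trans inf_le_left V_le_max) _
      (Ideal.add_mem _ (X_mem_max 1) (X_mem_max 2))
  · intro r hr s hs hreg
    exact corePull (onlyVar (K := K) 1).toRingHom (onlyVar (K := K) 2).toRingHom
      Polynomial.constantCoeff
      (fun x => by
        show Polynomial.constantCoeff ((onlyVar (K := K) 1) x) = ((onlyVar (K := K) 2) x).coeff 0
        rw [Polynomial.constantCoeff_apply, onlyVar_coeff0, onlyVar_coeff0])
      (onlyVar_surjective 2)
      (X 2) (onlyVar_X_ne (by decide)) (onlyVar_X_self 2)
      (X 1) (onlyVar_X_ne (by decide))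
      (by show (onlyVar (K := K) 1) (X 1) ≠ 0
          rw [onlyVar_X_self]; exact Polynomial.X_ne_zero)
      _ memU_iff r s
      (by show ((onlyVar (K := K) 2) r).coeff 0 = 0
          rw [onlyVar_coeff0]; exact constCoeff_of_mem_max hr)
      (by show ((onlyVar (K := K) 2) s).coeff 0 = 0
          rw [onlyVar_coeff0]; exact constCoeff_of_mem_max hs) hreg

end modules


section wmod
open MvPolynomial
variable {K : Type} [Field K]

lemma eq_single_of {n : ℕ} (v : Fin n →₀ ℕ) (j : Fin n) (h : ∀ i, i ≠ j → v i = 0) :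
    v = Finsupp.single j (v j) := by
  ext i
  rcases eq_or_ne i j with rfl | hi
  · simp
  · rw [h i hi, Finsupp.single_apply, if_neg (Ne.symm hi)]

lemma monomial_eq_XX_mul {n : ℕ} (i j : Fin n) (hij : i ≠ j) (d : Fin n →₀ ℕ)
    (hdi : d i ≠ 0) (hdj : d j ≠ 0) (c : K) :
    monomial d c = (X i * X j) * monomial (d - Finsupp.single i 1 - Finsupp.single j 1) c := by
  have h2 : ((d - Finsupp.single i 1 : Fin n →₀ ℕ)) j ≠ 0 := by
    rw [Finsupp.tsub_apply, Finsupp.single_eq_of_ne' hij]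
    omega
  rw [monomial_eq_X_mul i d hdi, monomial_eq_X_mul j _ h2, mul_assoc]

lemma U_span : (Ideal.span {X 0, X 1} ⊓ Ideal.span {X 0, X 2} : Ideal (MvPolynomial (Fin 3) K)) =
    Ideal.span {X 0, X 1 * X 2} := by
  apply le_antisymm
  · intro f hf
    obtain ⟨h1, h2⟩ := (memU_iff f).mp hf
    rw [as_sum f]
    apply Ideal.sum_mem
    intro v hv
    by_cases h0 : v 0 = 0
    · by_cases hv1 : v 1 = 0
      · have hv' : v = Finsupp.single 2 (v 2) := by
          refine eq_single_of v 2 (fun i hi => ?_)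
          fin_cases i
          · exact h0
          · exact hv1
          · exact absurd rfl hi
        have : coeff v f = 0 := by
          rw [hv', ← coeff_onlyVar, h2, Polynomial.coeff_zero]
        simp [this]
      · by_cases hv2 : v 2 = 0
        · have hv' : v = Finsupp.single 1 (v 1) := by
            refine eq_single_of v 1 (fun i hi => ?_)
            fin_cases i
            · exact h0
            · exact absurd rfl hi
            · exact hv2
          have : coeff v f = 0 := by
            rw [hv', ← coeff_onlyVar, h1, Polynomial.coeff_zero]
          simp [this]
        · rw [monomial_eq_XX_mul 1 2 (by decide) v hv1 hv2]
          exact Ideal.mul_mem_right _ _ (Ideal.subset_span (by simp))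
    · rw [monomial_eq_X_mul 0 v h0]
      exact Ideal.mul_mem_right _ _ (Ideal.subset_span (by simp))
  · rw [Ideal.span_le]
    rintro p (rfl | rfl)
    · exact Submodule.mem_inf.mpr ⟨Ideal.subset_span (by simp), Ideal.subset_span (by simp)⟩
    · exact Submodule.mem_inf.mpr ⟨Ideal.mul_mem_right _ _ (Ideal.subset_span (by simp)),
        Ideal.mul_mem_left _ _ (Ideal.subset_span (by simp))⟩

lemma extMap_X (i : Fin 3) : extMap K 3 (X i) = X (Fin.castSucc i) := by
  simp [extMap]

lemma extMap_X0 : extMap K 3 (X 0) = X (0 : Fin 4) := by rw [extMap_X]; rfl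
lemma extMap_X1 : extMap K 3 (X 1) = X (1 : Fin 4) := by rw [extMap_X]; rfl
lemma extMap_X2 : extMap K 3 (X 2) = X (2 : Fin 4) := by rw [extMap_X]; rfl

lemma mapV_span : Ideal.map (extMap K 3) (Ideal.span {X 0, X 1}) =
    (Ideal.span {X 0, X 1} : Ideal (MvPolynomial (Fin 4) K)) := by
  rw [Ideal.map_span, Set.image_insert_eq, Set.image_singleton, extMap_X0, extMap_X1]

lemma W_eq : (Ideal.map (extMap K 3) (Ideal.span {X 0, X 1} ⊓ Ideal.span {X 0, X 2}) ⊔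
      Ideal.span {X (Fin.last 3)} * Ideal.map (extMap K 3) (Ideal.span {X 0, X 1})
      : Ideal (MvPolynomial (Fin 4) K)) =
    Ideal.span {X 0, X 1 * X 2, X 3 * X 0, X 3 * X 1} := by
  have hlast : (Fin.last 3) = (3 : Fin 4) := rfl
  apply le_antisymm
  · apply sup_le
    · rw [U_span, Ideal.map_span, Set.image_insert_eq, Set.image_singleton, extMap_X0,
        map_mul, extMap_X1, extMap_X2, Ideal.span_le]
      rintro p (rfl | rfl)
      · exact Ideal.subset_span (by simp)
      · exact Ideal.subset_span (by simp)
    · rw [mapV_span, Ideal.mul_le]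
      intro a ha b hb
      obtain ⟨u, hu⟩ := Ideal.mem_span_singleton'.mp ha
      obtain ⟨c, d, hcd⟩ := Ideal.mem_span_pair.mp hb
      have : a * b = (u*c)*(X 3 * X 0) + (u*d)*(X 3 * X 1) := by
        rw [← hu, ← hcd, hlast]; ring
      rw [this]
      exact Ideal.add_mem _
        (Ideal.mul_mem_left _ _ (Ideal.subset_span (by simp)))
        (Ideal.mul_mem_left _ _ (Ideal.subset_span (by simp)))
  · rw [Ideal.span_le]
    have hU : ∀ p ∈ (Ideal.span {X 0, X 1} ⊓ Ideal.span {X 0, X 2} :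
        Ideal (MvPolynomial (Fin 3) K)), extMap K 3 p ∈
        Ideal.map (extMap K 3) (Ideal.span {X 0, X 1} ⊓ Ideal.span {X 0, X 2}) :=
      fun p hp => Ideal.mem_map_of_mem _ hp
    rintro p (rfl | rfl | rfl | rfl)
    · refine Ideal.mem_sup_left ?_
      rw [← extMap_X0]
      exact hU _ (Submodule.mem_inf.mpr ⟨Ideal.subset_span (by simp),
        Ideal.subset_span (by simp)⟩)
    · refine Ideal.mem_sup_left ?_
      rw [show (X 1 * X 2 : MvPolynomial (Fin 4) K) = extMap K 3 (X 1 * X 2) by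
        rw [map_mul, extMap_X1, extMap_X2]]
      exact hU _ (Submodule.mem_inf.mpr ⟨Ideal.mul_mem_right _ _ (Ideal.subset_span (by simp)),
        Ideal.mul_mem_left _ _ (Ideal.subset_span (by simp))⟩)
    · refine Ideal.mem_sup_right ?_
      rw [show (X 3 * X 0 : MvPolynomial (Fin 4) K) = X (Fin.last 3) * extMap K 3 (X 0) by
        rw [extMap_X0, hlast]]
      exact Ideal.mul_mem_mul (Ideal.subset_span rfl) (Ideal.mem_map_of_mem _
        (Ideal.subset_span (by simp)))
    · refine Ideal.mem_sup_right ?_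
      rw [show (X 3 * X 1 : MvPolynomial (Fin 4) K) = X (Fin.last 3) * extMap K 3 (X 1) by
        rw [extMap_X1, hlast]]
      exact Ideal.mul_mem_mul (Ideal.subset_span rfl) (Ideal.mem_map_of_mem _
        (Ideal.subset_span (by simp)))

lemma kX0 : killTo (K := K) ({0, 1} : Finset (Fin 4)) (X 0) = 0 := by
  rw [killTo_X, if_pos (by decide)]
lemma kX1 : killTo (K := K) ({0, 1} : Finset (Fin 4)) (X 1) = 0 := by
  rw [killTo_X, if_pos (by decide)]
lemma kX2 : killTo (K := K) ({0, 1} : Finset (Fin 4)) (X 2) = X 2 := by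
  rw [killTo_X, if_neg (by decide)]
lemma kX3 : killTo (K := K) ({0, 1} : Finset (Fin 4)) (X 3) = X 3 := by
  rw [killTo_X, if_neg (by decide)]

lemma memW_iff (f : MvPolynomial (Fin 4) K) :
    f ∈ (Ideal.span {X 0, X 1 * X 2, X 3 * X 0, X 3 * X 1} : Ideal (MvPolynomial (Fin 4) K)) ↔
      (killTo (K := K) ({0, 1} : Finset (Fin 4)) f = 0 ∧ onlyVar (K := K) 1 f = 0) := by
  constructor
  · intro hf
    have hle : (Ideal.span {X 0, X 1 * X 2, X 3 * X 0, X 3 * X 1} :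
        Ideal (MvPolynomial (Fin 4) K)) ≤
        RingHom.ker (killTo (K := K) ({0, 1} : Finset (Fin 4))).toRingHom ⊓
          RingHom.ker (onlyVar (K := K) 1).toRingHom := by
      rw [Ideal.span_le]
      rintro p (rfl | rfl | rfl | rfl) <;>
        refine Submodule.mem_inf.mpr ⟨RingHom.mem_ker.mpr ?_, RingHom.mem_ker.mpr ?_⟩
      · exact kX0
      · exact onlyVar_X_ne (by decide)
      · show killTo (K := K) ({0, 1} : Finset (Fin 4)) (X 1 * X 2) = 0
        rw [map_mul, kX1, zero_mul]
      · show onlyVar (K := K) 1 ((X 1 * X 2 : MvPolynomial (Fin 4) K)) = 0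
        rw [map_mul, onlyVar_X_ne (show (2 : Fin 4) ≠ 1 by decide), mul_zero]
      · show killTo (K := K) ({0, 1} : Finset (Fin 4)) (X 3 * X 0) = 0
        rw [map_mul, kX0, mul_zero]
      · show onlyVar (K := K) 1 ((X 3 * X 0 : MvPolynomial (Fin 4) K)) = 0
        rw [map_mul, onlyVar_X_ne (show (3 : Fin 4) ≠ 1 by decide), zero_mul]
      · show killTo (K := K) ({0, 1} : Finset (Fin 4)) (X 3 * X 1) = 0
        rw [map_mul, kX1, mul_zero]
      · show onlyVar (K := K) 1 ((X 3 * X 1 : MvPolynomial (Fin 4) K)) = 0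
        rw [map_mul, onlyVar_X_ne (show (3 : Fin 4) ≠ 1 by decide), zero_mul]
    obtain ⟨ha, hb⟩ := Submodule.mem_inf.mp (hle hf)
    exact ⟨RingHom.mem_ker.mp ha, RingHom.mem_ker.mp hb⟩
  · rintro ⟨hk, ho⟩
    rw [as_sum f]
    apply Ideal.sum_mem
    intro v hv
    by_cases h0 : v 0 = 0
    · by_cases h1 : v 1 = 0
      · have hcond : ∀ i ∈ ({0, 1} : Finset (Fin 4)), v i = 0 := by
          intro i hi
          fin_cases hi
          · exact h0
          · exact h1
        have : coeff v f = 0 := by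
          rw [← coeff_killTo ({0, 1} : Finset (Fin 4)) f v hcond, hk, MvPolynomial.coeff_zero]
        simp [this]
      · by_cases h2 : v 2 = 0
        · by_cases h3 : v 3 = 0
          · have hv' : v = Finsupp.single 1 (v 1) := by
              refine eq_single_of v 1 (fun i hi => ?_)
              fin_cases i
              · exact h0
              · exact absurd rfl hi
              · exact h2
              · exact h3
            have : coeff v f = 0 := by
              rw [hv', ← coeff_onlyVar, ho, Polynomial.coeff_zero]
            simp [this]
          · rw [monomial_eq_XX_mul 3 1 (by decide) v h3 h1]
            exact Ideal.mul_mem_right _ _ (Ideal.subset_span (by simp))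
        · rw [monomial_eq_XX_mul 1 2 (by decide) v h1 h2]
          exact Ideal.mul_mem_right _ _ (Ideal.subset_span (by simp))
    · rw [monomial_eq_X_mul 0 v h0]
      exact Ideal.mul_mem_right _ _ (Ideal.subset_span (by simp))

lemma depthW : mdepth (maxIdeal K 4) (MvPolynomial (Fin 4) K ⧸
    (Ideal.map (extMap K 3) (Ideal.span {X 0, X 1} ⊓ Ideal.span {X 0, X 2}) ⊔
      Ideal.span {X (Fin.last 3)} * Ideal.map (extMap K 3) (Ideal.span {X 0, X 1}))) = 1 := by
  rw [W_eq]
  have e1 : killTo (K := K) ({0, 1} : Finset (Fin 4)) (X 1 + X 2) = X 2 := by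
    rw [map_add, kX1, kX2, zero_add]
  have e2 : onlyVar (K := K) 1 ((X 1 + X 2 : MvPolynomial (Fin 4) K)) = Polynomial.X := by
    rw [map_add, onlyVar_X_self, onlyVar_X_ne (show (2 : Fin 4) ≠ 1 by decide), add_zero]
  apply mdepth_quot_eq_one (maxIdeal K 4) _ (X 1 + X 2)
    (Ideal.add_mem _ (X_mem_max 1) (X_mem_max 2))
  · intro x hx
    rw [memW_iff] at hx ⊢
    rw [map_mul, map_mul, e1, e2] at hx
    exact ⟨(mul_eq_zero.mp hx.1).resolve_left (MvPolynomial.X_ne_zero 2),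
      (mul_eq_zero.mp hx.2).resolve_left Polynomial.X_ne_zero⟩
  · refine one_not_mem_sup _ ?_ _ (Ideal.add_mem _ (X_mem_max 1) (X_mem_max 2))
    rw [Ideal.span_le]
    rintro p (rfl | rfl | rfl | rfl)
    · exact X_mem_max 0
    · exact Ideal.mul_mem_right _ _ (X_mem_max 1)
    · exact Ideal.mul_mem_right _ _ (X_mem_max 3)
    · exact Ideal.mul_mem_right _ _ (X_mem_max 3)
  · intro r hr s hs hreg
    exact corePull (killTo (K := K) ({0, 1} : Finset (Fin 4))).toRingHom
      (onlyVar (K := K) 1).toRingHom constantCoeff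
      (fun x => by
        show constantCoeff (killTo (K := K) ({0, 1} : Finset (Fin 4)) x)
          = ((onlyVar (K := K) 1) x).coeff 0
        rw [constantCoeff_killTo, onlyVar_coeff0])
      (onlyVar_surjective 1)
      (X 1) kX1 (onlyVar_X_self 1)
      (X 2) (onlyVar_X_ne (show (2 : Fin 4) ≠ 1 by decide))
      (by show killTo (K := K) ({0, 1} : Finset (Fin 4)) (X 2) ≠ 0
          rw [kX2]; exact MvPolynomial.X_ne_zero 2)
      _ memW_iff r s
      (by show ((onlyVar (K := K) 1) r).coeff 0 = 0
          rw [onlyVar_coeff0]; exact constCoeff_of_mem_max hr)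
      (by show ((onlyVar (K := K) 1) s).coeff 0 = 0
          rw [onlyVar_coeff0]; exact constCoeff_of_mem_max hs) hreg

end wmod


section m1
open MvPolynomial
variable {K : Type} [Field K]

lemma depthJ1 : mdepth (maxIdeal K 3)
    (MvPolynomial (Fin 3) K ⧸ (Ideal.span {X 0, X 2} : Ideal (MvPolynomial (Fin 3) K))) = 1 := by
  apply mdepth_quot_eq_one (maxIdeal K 3) _ (X 1) (X_mem_max 1)
  · intro x hx
    rw [memJ1_iff] at hx ⊢
    rw [map_mul, onlyVar_X_self] at hx
    exact (mul_eq_zero.mp hx).resolve_left Polynomial.X_ne_zero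
  · exact one_not_mem_sup _ J1_le_max _ (X_mem_max 1)
  · intro r hr s hs hreg
    exact corePoly (onlyVar (K := K) 1).toRingHom (onlyVar_surjective 1) _ memJ1_iff r s
      (by show ((onlyVar (K := K) 1) r).coeff 0 = 0
          rw [onlyVar_coeff0]; exact constCoeff_of_mem_max hr)
      (by show ((onlyVar (K := K) 1) s).coeff 0 = 0
          rw [onlyVar_coeff0]; exact constCoeff_of_mem_max hs) hreg

lemma depthM1 : mdepth (maxIdeal K 3)
    (idealQuot (Ideal.span {X 0, X 1} ⊓ Ideal.span {X 0, X 2})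
      (Ideal.span {X 0, X 1} : Ideal (MvPolynomial (Fin 3) K))) = 1 := by
  set R3 := MvPolynomial (Fin 3) K
  set V : Ideal R3 := Ideal.span {X 0, X 1} with hV
  set U : Ideal R3 := Ideal.span {X 0, X 1} ⊓ Ideal.span {X 0, X 2} with hU
  have hx1V : (X 1 : R3) ∈ V := Ideal.subset_span (by simp)
  set v₁ : ↥V := ⟨X 1, hx1V⟩ with hv₁
  set φ : R3 →ₗ[R3] idealQuot U V :=
    (Submodule.mkQ (Submodule.comap V.subtype U)).comp (LinearMap.toSpanSingleton R3 V v₁)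
    with hφ
  have hφ_apply : ∀ f : R3, φ f = Submodule.Quotient.mk (f • v₁) := fun f => rfl
  have hX0U : (X 0 : R3) ∈ U :=
    Submodule.mem_inf.mpr ⟨Ideal.subset_span (by simp), Ideal.subset_span (by simp)⟩
  have hsurj : Function.Surjective φ := by
    intro q
    obtain ⟨⟨w, hw⟩, rfl⟩ := Submodule.Quotient.mk_surjective _ q
    obtain ⟨a, b, hab⟩ := Ideal.mem_span_pair.mp hw
    refine ⟨b, ?_⟩
    rw [hφ_apply, Submodule.Quotient.eq]
    rw [Submodule.mem_comap]
    have : V.subtype (b • v₁ - ⟨w, hw⟩) = b * X 1 - w := by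
      simp [hv₁, smul_eq_mul]
    rw [this]
    have hw' : b * X 1 - w = -(a * X 0) := by rw [← hab]; ring
    rw [hw']
    exact Submodule.neg_mem _ (Ideal.mul_mem_left _ a hX0U)
  have hker : LinearMap.ker φ = (Ideal.span {X 0, X 2} : Ideal R3) := by
    ext f
    rw [LinearMap.mem_ker, hφ_apply, Submodule.Quotient.mk_eq_zero, Submodule.mem_comap]
    have hcoe : V.subtype (f • v₁) = f * X 1 := by simp [hv₁, smul_eq_mul]
    rw [hcoe]
    constructor
    · intro hfU
      have hmem : f * X 1 ∈ (Ideal.span {X 0, X 2} : Ideal R3) := (Submodule.mem_inf.mp hfU).2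
      rw [memJ1_iff] at hmem ⊢
      rw [map_mul, onlyVar_X_self] at hmem
      exact (mul_eq_zero.mp hmem).resolve_right Polynomial.X_ne_zero
    · intro hf
      obtain ⟨a, b, hab⟩ := Ideal.mem_span_pair.mp hf
      refine Submodule.mem_inf.mpr ⟨?_, ?_⟩
      · have : f * X 1 = (a * X 1) * X 0 + (b * X 2) * X 1 := by rw [← hab]; ring
        rw [this]
        exact Ideal.add_mem _ (Ideal.mul_mem_left _ _ (Ideal.subset_span (by simp)))
          (Ideal.mul_mem_left _ _ (Ideal.subset_span (by simp)))
      · have : f * X 1 = (a * X 1) * X 0 + (b * X 1) * X 2 := by rw [← hab]; ring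
        rw [this]
        exact Ideal.add_mem _ (Ideal.mul_mem_left _ _ (Ideal.subset_span (by simp)))
          (Ideal.mul_mem_left _ _ (Ideal.subset_span (by simp)))
  have e : (R3 ⧸ (Ideal.span {X 0, X 2} : Ideal R3)) ≃ₗ[R3] idealQuot U V :=
    (Submodule.quotEquivOfEq _ _ hker.symm).trans (φ.quotKerEquivOfSurjective hsurj)
  rw [← mdepth_congr (maxIdeal K 3) e]
  exact depthJ1

end m1

theorem example_depth_one {K : Type} [Field K] :
    let V : Ideal (MvPolynomial (Fin 3) K) := Ideal.span {X 0, X 1}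
    let U : Ideal (MvPolynomial (Fin 3) K) :=
      Ideal.span {X 0, X 1} ⊓ Ideal.span {X 0, X 2}
    let W : Ideal (MvPolynomial (Fin 4) K) :=
      Ideal.map (extMap K 3) U ⊔
        Ideal.span {X (Fin.last 3)} * Ideal.map (extMap K 3) V
    mdepth (maxIdeal K 3) (idealQuot U V) = 1 ∧
      mdepth (maxIdeal K 3) (MvPolynomial (Fin 3) K ⧸ U) = 1 ∧
      mdepth (maxIdeal K 3) (MvPolynomial (Fin 3) K ⧸ V) = 1 ∧
      mdepth (maxIdeal K 4) (MvPolynomial (Fin 4) K ⧸ W) = 1 := by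
  intro V U W
  exact ⟨depthM1, depthU, depthV, depthW⟩
end
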